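/- arXiv:0903.4518 — 4 statements merged into one kernel-verified Lean document; each statement's English description precedes it below -/
import Mathlib

section
/- Let d ≥ 2, λ > (d−1)/2, T > 0 and q ≥ 1. For τ > 0, define on ℝ^d the kernel G_τ(y) = (4πτ)^{−d/2} Σ_{k∈ℤ} exp(−|y − k e₁|²/(4τ)) (periodization in the first coordinate only), and set π(y) = 1 + |y^{2…d}|^{2λ}. Then there is a constant K, depending only on d, λ, q and T, such that for all τ ∈ (0,T], ( ∫_{[0,1)×ℝ^{d−1}} |∇G_τ(y)|^q π(y) dy )^{1/q} ≤ K τ^{−((d+1)/2 − d/(2q))}. -/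
open MeasureTheory Real

/-- The reference measure on `𝕋 × ℝ^{d-1}`, identified with `[0,1) × ℝ^{d-1}`. -/
noncomputable def cylMeasure (k : ℕ) : Measure (ℝ × EuclideanSpace ℝ (Fin k)) :=
  (volume.restrict (Set.Ico (0:ℝ) 1)).prod volume

/-- The gradient of the heat kernel on `𝕋 × ℝ^{d-1}` (periodized in the first
coordinate only):
`∇G_τ(y) = -(4πτ)^{-d/2} ∑_{k∈ℤ} ((y - k e₁)/(2τ)) exp(-|y - k e₁|²/(4τ))`. -/
noncomputable def gradCylHeatKernel (d : ℕ) (τ : ℝ)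
    (y : ℝ × EuclideanSpace ℝ (Fin (d - 1))) : ℝ × EuclideanSpace ℝ (Fin (d - 1)) :=
  -((4 * π * τ) ^ (-(d : ℝ) / 2)) •
    ∑' k : ℤ,
      Real.exp (-((y.1 - (k : ℝ)) ^ 2 + ‖y.2‖ ^ 2) / (4 * τ)) •
        ((2 * τ)⁻¹ • ((y.1 - (k : ℝ), y.2) : ℝ × EuclideanSpace ℝ (Fin (d - 1))))

/-- The Euclidean norm of an element of `ℝ × ℝ^{d-1}`. -/
noncomputable def pairNorm {k : ℕ} (p : ℝ × EuclideanSpace ℝ (Fin k)) : ℝ :=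
  Real.sqrt (p.1 ^ 2 + ‖p.2‖ ^ 2)

namespace Stmt6Aux


noncomputable def mdist (k : ℤ) : ℝ := max (|(k : ℝ)| - 1) 0

lemma mdist_nonneg (k : ℤ) : 0 ≤ mdist k := le_max_right _ _

lemma sq_mdist_ge (k : ℤ) : (k : ℝ) ^ 2 / 2 - 1 ≤ mdist k ^ 2 := by
  rcases le_or_gt (|(k : ℝ)|) 1 with h | h
  · have h1 : (k : ℝ) ^ 2 ≤ 1 := by nlinarith [sq_abs (k : ℝ), abs_nonneg (k : ℝ)]
    nlinarith [sq_nonneg (mdist k)]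
  · have h0 : mdist k = |(k : ℝ)| - 1 := max_eq_left (by linarith)
    rw [h0]
    nlinarith [sq_abs (k : ℝ), abs_nonneg (k : ℝ), sq_nonneg (|(k : ℝ)| - 2)]

lemma mdist_le_abs {k : ℤ} {t : ℝ} (ht0 : 0 ≤ t) (ht1 : t ≤ 1) :
    mdist k ≤ |t - (k : ℝ)| := by
  rcases le_or_gt (k : ℝ) 0 with h | h
  · have : |t - (k : ℝ)| = t - k := abs_of_nonneg (by linarith)
    rw [this, mdist]
    have : |(k : ℝ)| = -k := abs_of_nonpos h
    rw [this]
    apply max_le <;> linarith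
  · have hk1 : (1 : ℝ) ≤ (k : ℝ) := by exact_mod_cast h
    have : |t - (k : ℝ)| = (k : ℝ) - t := by rw [abs_of_nonpos (by linarith)]; ring
    rw [this, mdist]
    have : |(k : ℝ)| = k := abs_of_pos h
    rw [this]
    apply max_le <;> linarith

lemma summable_exp_neg_mul_sq_int {c : ℝ} (hc : 0 < c) :
    Summable fun k : ℤ => rexp (-(c * (k : ℝ) ^ 2)) := by
  have hgeom : Summable fun n : ℕ => rexp (-c) ^ n :=
    summable_geometric_of_lt_one (exp_pos _).le (exp_lt_one_iff.mpr (by linarith))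
  have key : ∀ f : ℕ → ℝ, (∀ n : ℕ, f n = rexp (-(c * (n : ℝ) ^ 2))) → Summable f := by
    intro f hf
    refine Summable.of_nonneg_of_le (fun n => by rw [hf]; positivity) (fun n => ?_) hgeom
    rw [hf, ← Real.exp_nat_mul]
    apply Real.exp_le_exp.mpr
    have : (n : ℝ) ≤ (n : ℝ) ^ 2 := by
      exact_mod_cast Nat.cast_le.mpr (Nat.le_self_pow two_ne_zero n)
    nlinarith
  apply Summable.of_nat_of_neg
  · exact key _ fun n => by push_cast; ring_nf
  · exact key _ fun n => by push_cast; ring_nf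

lemma summable_exp_shift {c : ℝ} (hc : 0 < c) (t : ℝ) :
    Summable fun k : ℤ => rexp (-(c * (t - (k : ℝ)) ^ 2)) := by
  refine Summable.of_nonneg_of_le (fun k => (exp_pos _).le) (fun k => ?_)
    ((summable_exp_neg_mul_sq_int (show 0 < c / 2 by linarith)).mul_left (rexp (c * t ^ 2)))
  rw [← Real.exp_add]
  apply Real.exp_le_exp.mpr
  nlinarith [mul_nonneg hc.le (sq_nonneg ((k : ℝ) - 2 * t))]

lemma summable_exp_mdist {c : ℝ} (hc : 0 < c) :
    Summable fun k : ℤ => rexp (-(c * mdist k ^ 2)) := by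
  refine Summable.of_nonneg_of_le (fun k => (exp_pos _).le) (fun k => ?_)
    ((summable_exp_neg_mul_sq_int (show 0 < c / 2 by linarith)).mul_left (rexp c))
  rw [← Real.exp_add]
  apply Real.exp_le_exp.mpr
  nlinarith [sq_mdist_ge k, mul_le_mul_of_nonneg_left (sq_mdist_ge k) hc.le]

/-- `r * exp(-(r^2/a)) ≤ √a` for `a > 0`, `0 ≤ r`. -/
lemma mul_exp_neg_sq_le {a r : ℝ} (ha : 0 < a) (hr : 0 ≤ r) :
    r * rexp (-(r ^ 2 / a)) ≤ Real.sqrt a := by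
  rcases le_or_gt r (Real.sqrt a) with h | h
  · calc r * rexp (-(r ^ 2 / a)) ≤ r * 1 := by
          apply mul_le_mul_of_nonneg_left _ hr
          exact exp_le_one_iff.mpr (neg_nonpos.mpr (by positivity))
      _ ≤ Real.sqrt a := by rwa [mul_one]
  · have hrpos : 0 < r := lt_of_le_of_lt (Real.sqrt_nonneg a) h
    have hu : 0 < r ^ 2 / a := by positivity
    have hexp : rexp (-(r ^ 2 / a)) ≤ a / r ^ 2 := by
      rw [Real.exp_neg]
      rw [inv_le_comm₀ (exp_pos _) (by positivity)]
      calc (a / r^2)⁻¹ = r ^ 2 / a := by rw [inv_div]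
        _ ≤ r ^ 2 / a + 1 := by linarith
        _ ≤ rexp (r ^ 2 / a) := by linarith [Real.add_one_le_exp (r ^ 2 / a)]
    calc r * rexp (-(r ^ 2 / a)) ≤ r * (a / r ^ 2) := by
          exact mul_le_mul_of_nonneg_left hexp hr
      _ = a / r := by field_simp
      _ ≤ Real.sqrt a := by
          rw [div_le_iff₀ hrpos]
          calc a = Real.sqrt a * Real.sqrt a := (Real.mul_self_sqrt ha.le).symm
            _ ≤ Real.sqrt a * r := by
                apply mul_le_mul_of_nonneg_left h.le (Real.sqrt_nonneg a)

/-- `v^n * exp(-v) ≤ n^n` for `v ≥ 0`, `n ≥ 1`. -/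
lemma pow_mul_exp_neg_le {v : ℝ} (hv : 0 ≤ v) {n : ℕ} (hn : 1 ≤ n) :
    v ^ n * rexp (-v) ≤ (n : ℝ) ^ n := by
  have hnpos : (0 : ℝ) < n := by exact_mod_cast hn
  have h1 : v / n ≤ rexp (v / n) := by
    linarith [Real.add_one_le_exp (v / n)]
  have h2 : (v / n) ^ n ≤ rexp v := by
    calc (v / n) ^ n ≤ rexp (v / n) ^ n := pow_le_pow_left₀ (by positivity) h1 n
      _ = rexp v := by rw [← Real.exp_nat_mul]; congr 1; field_simp
  have h3 : v ^ n ≤ (n : ℝ) ^ n * rexp v := by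
    have := mul_le_mul_of_nonneg_left h2 (by positivity : (0:ℝ) ≤ (n:ℝ) ^ n)
    calc v ^ n = (n : ℝ) ^ n * (v / n) ^ n := by
          rw [div_pow]; field_simp
      _ ≤ (n : ℝ) ^ n * rexp v := this
  calc v ^ n * rexp (-v) ≤ ((n : ℝ) ^ n * rexp v) * rexp (-v) := by
        apply mul_le_mul_of_nonneg_right h3 (exp_pos _).le
    _ = (n : ℝ) ^ n := by rw [mul_assoc, ← Real.exp_add]; simp



lemma summable_exp_shift_div {s : ℝ} (hs : 0 < s) (t : ℝ) :
    Summable fun k : ℤ => rexp (-((t - (k : ℝ)) ^ 2 / s)) := by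
  have := summable_exp_shift (inv_pos.mpr hs) t
  apply this.congr
  intro k
  rw [div_eq_inv_mul]

noncomputable def Sfun (τ t : ℝ) : ℝ := ∑' k : ℤ, rexp (-((t - (k : ℝ)) ^ 2 / (8 * τ)))

lemma pairNorm_nonneg {k : ℕ} (p : ℝ × EuclideanSpace ℝ (Fin k)) : 0 ≤ pairNorm p :=
  Real.sqrt_nonneg _

lemma pairNorm_smul {k : ℕ} (r : ℝ) (p : ℝ × EuclideanSpace ℝ (Fin k)) :
    pairNorm (r • p) = |r| * pairNorm p := by
  unfold pairNorm
  have h1 : (r • p).1 = r * p.1 := rfl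
  have h2 : ‖(r • p).2‖ = |r| * ‖p.2‖ := by
    have : (r • p).2 = r • p.2 := rfl
    rw [this, norm_smul, Real.norm_eq_abs]
  rw [h1, h2]
  have : (r * p.1) ^ 2 + (|r| * ‖p.2‖) ^ 2 = |r| ^ 2 * (p.1 ^ 2 + ‖p.2‖ ^ 2) := by
    rw [mul_pow, mul_pow, sq_abs]; ring
  rw [this, Real.sqrt_mul (sq_nonneg _), Real.sqrt_sq (abs_nonneg r)]

lemma pairNorm_le {k : ℕ} (p : ℝ × EuclideanSpace ℝ (Fin k)) :
    pairNorm p ≤ Real.sqrt 2 * ‖p‖ := by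
  unfold pairNorm
  have h1 : |p.1| ≤ ‖p‖ := by
    have := norm_fst_le p
    rwa [Real.norm_eq_abs] at this
  have h2 : ‖p.2‖ ≤ ‖p‖ := norm_snd_le p
  have hsq : p.1 ^ 2 + ‖p.2‖ ^ 2 ≤ 2 * ‖p‖ ^ 2 := by
    have e1 : p.1 ^ 2 ≤ ‖p‖ ^ 2 := by
      rw [← sq_abs]
      exact pow_le_pow_left₀ (abs_nonneg _) h1 2
    have e2 : ‖p.2‖ ^ 2 ≤ ‖p‖ ^ 2 := pow_le_pow_left₀ (norm_nonneg _) h2 2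
    linarith
  calc Real.sqrt (p.1 ^ 2 + ‖p.2‖ ^ 2) ≤ Real.sqrt (2 * ‖p‖ ^ 2) := Real.sqrt_le_sqrt hsq
    _ = Real.sqrt 2 * ‖p‖ := by
        rw [Real.sqrt_mul (by norm_num), Real.sqrt_sq (norm_nonneg p)]

lemma norm_term_le (m : ℕ) {τ : ℝ} (hτ : 0 < τ) (y : ℝ × EuclideanSpace ℝ (Fin m)) (k : ℤ) :
    ‖rexp (-((y.1 - (k : ℝ)) ^ 2 + ‖y.2‖ ^ 2) / (4 * τ)) •
        ((2 * τ)⁻¹ • ((y.1 - (k : ℝ), y.2) : ℝ × EuclideanSpace ℝ (Fin m)))‖ ≤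
      Real.sqrt (8 * τ) / (2 * τ) *
        (rexp (-((y.1 - (k : ℝ)) ^ 2 / (8 * τ))) * rexp (-(‖y.2‖ ^ 2 / (8 * τ)))) := by
  set a : ℝ := y.1 - (k : ℝ) with ha
  set A : ℝ := a ^ 2 + ‖y.2‖ ^ 2 with hA
  have hA0 : 0 ≤ A := by positivity
  set r : ℝ := Real.sqrt A with hr
  have hr2 : r ^ 2 = A := Real.sq_sqrt hA0
  have hnorm_pair : ‖((a, y.2) : ℝ × EuclideanSpace ℝ (Fin m))‖ ≤ r := by
    rw [Prod.norm_def]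
    apply max_le
    · rw [Real.norm_eq_abs, ← Real.sqrt_sq_eq_abs]
      exact Real.sqrt_le_sqrt (by rw [hA]; nlinarith [sq_nonneg ‖y.2‖])
    · rw [← Real.sqrt_sq (norm_nonneg y.2)]
      exact Real.sqrt_le_sqrt (by rw [hA]; nlinarith [sq_nonneg a])
  have hsplit4 : rexp (-A / (4 * τ)) = rexp (-(A / (8 * τ))) * rexp (-(A / (8 * τ))) := by
    rw [← Real.exp_add]; congr 1; field_simp; ring
  have hsplit8 : rexp (-(A / (8 * τ))) =
      rexp (-(a ^ 2 / (8 * τ))) * rexp (-(‖y.2‖ ^ 2 / (8 * τ))) := by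
    rw [← Real.exp_add]; congr 1; rw [hA]; field_simp; ring
  calc ‖rexp (-A / (4 * τ)) • ((2 * τ)⁻¹ • ((a, y.2) : ℝ × EuclideanSpace ℝ (Fin m)))‖
      = rexp (-A / (4 * τ)) * ((2 * τ)⁻¹ * ‖((a, y.2) : ℝ × EuclideanSpace ℝ (Fin m))‖) := by
        rw [norm_smul, norm_smul, Real.norm_eq_abs, Real.norm_eq_abs,
          abs_of_pos (exp_pos _), abs_of_pos (by positivity : (0:ℝ) < (2*τ)⁻¹)]
    _ ≤ rexp (-A / (4 * τ)) * ((2 * τ)⁻¹ * r) := by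
        apply mul_le_mul_of_nonneg_left _ (exp_pos _).le
        exact mul_le_mul_of_nonneg_left hnorm_pair (by positivity)
    _ = (2 * τ)⁻¹ * (r * rexp (-(r ^ 2 / (8 * τ)))) * rexp (-(A / (8 * τ))) := by
        rw [hsplit4, hr2]; ring
    _ ≤ (2 * τ)⁻¹ * Real.sqrt (8 * τ) * rexp (-(A / (8 * τ))) := by
        apply mul_le_mul_of_nonneg_right _ (exp_pos _).le
        apply mul_le_mul_of_nonneg_left _ (by positivity)
        exact mul_exp_neg_sq_le (by positivity) (Real.sqrt_nonneg _)
    _ = Real.sqrt (8 * τ) / (2 * τ) *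
        (rexp (-(a ^ 2 / (8 * τ))) * rexp (-(‖y.2‖ ^ 2 / (8 * τ)))) := by
        rw [hsplit8]; ring

lemma summable_term (m : ℕ) {τ : ℝ} (hτ : 0 < τ) (y : ℝ × EuclideanSpace ℝ (Fin m)) :
    Summable (fun k : ℤ => rexp (-((y.1 - (k : ℝ)) ^ 2 + ‖y.2‖ ^ 2) / (4 * τ)) •
        ((2 * τ)⁻¹ • ((y.1 - (k : ℝ), y.2) : ℝ × EuclideanSpace ℝ (Fin m)))) := by
  apply Summable.of_norm_bounded ?_ (norm_term_le m hτ y)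
  exact (((summable_exp_shift_div (by positivity) y.1).mul_right _).mul_left _)

lemma summable_norm_term (m : ℕ) {τ : ℝ} (hτ : 0 < τ) (y : ℝ × EuclideanSpace ℝ (Fin m)) :
    Summable (fun k : ℤ => ‖rexp (-((y.1 - (k : ℝ)) ^ 2 + ‖y.2‖ ^ 2) / (4 * τ)) •
        ((2 * τ)⁻¹ • ((y.1 - (k : ℝ), y.2) : ℝ × EuclideanSpace ℝ (Fin m)))‖) := by
  apply Summable.of_nonneg_of_le (fun k => norm_nonneg _) (norm_term_le m hτ y)
  exact (((summable_exp_shift_div (by positivity) y.1).mul_right _).mul_left _)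

lemma const_arith (d : ℕ) {τ : ℝ} (hτ : 0 < τ) :
    (4 * π * τ) ^ (-(d : ℝ) / 2) * (Real.sqrt 2 * (Real.sqrt (8 * τ) / (2 * τ))) =
      2 * (4 * π) ^ (-(d : ℝ) / 2) * τ ^ (-((d : ℝ) + 1) / 2) := by
  have hπ : (0:ℝ) < 4 * π := by positivity
  rw [Real.mul_rpow hπ.le hτ.le]
  have h2 : Real.sqrt 2 * Real.sqrt (8 * τ) = 4 * Real.sqrt τ := by
    rw [← Real.sqrt_mul (by norm_num)]
    rw [show (2:ℝ) * (8 * τ) = 4 ^ 2 * τ by ring]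
    rw [Real.sqrt_mul (by positivity), Real.sqrt_sq (by norm_num)]
  have h3 : τ ^ (-(d : ℝ) / 2) * (4 * Real.sqrt τ / (2 * τ)) =
      2 * τ ^ (-((d : ℝ) + 1) / 2) := by
    rw [Real.sqrt_eq_rpow]
    rw [show -((d : ℝ) + 1) / 2 = -(d : ℝ) / 2 + (1 / 2 - 1) by ring]
    rw [Real.rpow_add hτ, Real.rpow_sub hτ, Real.rpow_one]
    field_simp
    ring
  calc (4 * π) ^ (-(d : ℝ) / 2) * τ ^ (-(d : ℝ) / 2) *
        (Real.sqrt 2 * (Real.sqrt (8 * τ) / (2 * τ)))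
      = (4 * π) ^ (-(d : ℝ) / 2) *
          (τ ^ (-(d : ℝ) / 2) * (Real.sqrt 2 * Real.sqrt (8 * τ) / (2 * τ))) := by ring
    _ = (4 * π) ^ (-(d : ℝ) / 2) *
          (τ ^ (-(d : ℝ) / 2) * (4 * Real.sqrt τ / (2 * τ))) := by rw [h2]
    _ = 2 * (4 * π) ^ (-(d : ℝ) / 2) * τ ^ (-((d : ℝ) + 1) / 2) := by rw [h3]; ring

lemma pairNorm_grad_le (d : ℕ) {τ : ℝ} (hτ : 0 < τ)
    (y : ℝ × EuclideanSpace ℝ (Fin (d - 1))) :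
    pairNorm (gradCylHeatKernel d τ y) ≤
      2 * (4 * π) ^ (-(d : ℝ) / 2) * τ ^ (-((d : ℝ) + 1) / 2) *
        (rexp (-(‖y.2‖ ^ 2 / (8 * τ))) * Sfun τ y.1) := by
  have hπτ : (0:ℝ) < 4 * π * τ := by positivity
  have key : ‖∑' k : ℤ, rexp (-((y.1 - (k : ℝ)) ^ 2 + ‖y.2‖ ^ 2) / (4 * τ)) •
        ((2 * τ)⁻¹ • ((y.1 - (k : ℝ), y.2) : ℝ × EuclideanSpace ℝ (Fin (d - 1))))‖ ≤
      Real.sqrt (8 * τ) / (2 * τ) * (rexp (-(‖y.2‖ ^ 2 / (8 * τ))) * Sfun τ y.1) := by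
    calc ‖∑' k : ℤ, _‖ ≤ ∑' k : ℤ, ‖rexp (-((y.1 - (k : ℝ)) ^ 2 + ‖y.2‖ ^ 2) / (4 * τ)) •
          ((2 * τ)⁻¹ • ((y.1 - (k : ℝ), y.2) : ℝ × EuclideanSpace ℝ (Fin (d - 1))))‖ :=
        norm_tsum_le_tsum_norm (summable_norm_term _ hτ y)
      _ ≤ ∑' k : ℤ, Real.sqrt (8 * τ) / (2 * τ) *
            (rexp (-((y.1 - (k : ℝ)) ^ 2 / (8 * τ))) * rexp (-(‖y.2‖ ^ 2 / (8 * τ)))) :=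
        Summable.tsum_le_tsum (norm_term_le _ hτ y) (summable_norm_term _ hτ y)
          (((summable_exp_shift_div (by positivity) y.1).mul_right _).mul_left _)
      _ = Real.sqrt (8 * τ) / (2 * τ) * (rexp (-(‖y.2‖ ^ 2 / (8 * τ))) * Sfun τ y.1) := by
        rw [tsum_mul_left, tsum_mul_right, Sfun]
        ring
  calc pairNorm (gradCylHeatKernel d τ y)
      = (4 * π * τ) ^ (-(d : ℝ) / 2) * pairNorm (∑' k : ℤ,
          rexp (-((y.1 - (k : ℝ)) ^ 2 + ‖y.2‖ ^ 2) / (4 * τ)) •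
            ((2 * τ)⁻¹ • ((y.1 - (k : ℝ), y.2) : ℝ × EuclideanSpace ℝ (Fin (d - 1))))) := by
        rw [gradCylHeatKernel, pairNorm_smul, abs_neg,
          abs_of_pos (Real.rpow_pos_of_pos hπτ _)]
    _ ≤ (4 * π * τ) ^ (-(d : ℝ) / 2) * (Real.sqrt 2 * (Real.sqrt (8 * τ) / (2 * τ) *
          (rexp (-(‖y.2‖ ^ 2 / (8 * τ))) * Sfun τ y.1))) := by
        apply mul_le_mul_of_nonneg_left _ (Real.rpow_pos_of_pos hπτ _).le
        calc pairNorm _ ≤ Real.sqrt 2 * ‖_‖ := pairNorm_le _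
          _ ≤ _ := mul_le_mul_of_nonneg_left key (Real.sqrt_nonneg 2)
    _ = 2 * (4 * π) ^ (-(d : ℝ) / 2) * τ ^ (-((d : ℝ) + 1) / 2) *
          (rexp (-(‖y.2‖ ^ 2 / (8 * τ))) * Sfun τ y.1) := by
        rw [← const_arith d hτ]; ring

lemma measurable_grad (d : ℕ) {τ : ℝ} (hτ : 0 < τ) :
    Measurable (gradCylHeatKernel d τ) := by
  have hw : ∀ k : ℤ, Continuous (fun y : ℝ × EuclideanSpace ℝ (Fin (d - 1)) =>
      rexp (-((y.1 - (k : ℝ)) ^ 2 + ‖y.2‖ ^ 2) / (4 * τ)) •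
        ((2 * τ)⁻¹ • ((y.1 - (k : ℝ), y.2) : ℝ × EuclideanSpace ℝ (Fin (d - 1))))) := by
    intro k
    apply Continuous.smul (f := fun y : ℝ × EuclideanSpace ℝ (Fin (d - 1)) =>
        rexp (-((y.1 - (k : ℝ)) ^ 2 + ‖y.2‖ ^ 2) / (4 * τ)))
      (g := fun y : ℝ × EuclideanSpace ℝ (Fin (d - 1)) =>
        (2 * τ)⁻¹ • ((y.1 - (k : ℝ), y.2) : ℝ × EuclideanSpace ℝ (Fin (d - 1))))
    · apply Real.continuous_exp.comp
      fun_prop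
    · apply Continuous.const_smul (g := fun y : ℝ × EuclideanSpace ℝ (Fin (d - 1)) =>
        ((y.1 - (k : ℝ), y.2) : ℝ × EuclideanSpace ℝ (Fin (d - 1)))) ?_ ((2 * τ)⁻¹)
      fun_prop
  have hmeas : Measurable (fun y : ℝ × EuclideanSpace ℝ (Fin (d - 1)) => ∑' k : ℤ,
      rexp (-((y.1 - (k : ℝ)) ^ 2 + ‖y.2‖ ^ 2) / (4 * τ)) •
        ((2 * τ)⁻¹ • ((y.1 - (k : ℝ), y.2) : ℝ × EuclideanSpace ℝ (Fin (d - 1))))) := by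
    apply measurable_of_tendsto_metrizable' (Filter.atTop : Filter (Finset ℤ))
      (f := fun (s : Finset ℤ) (y : ℝ × EuclideanSpace ℝ (Fin (d - 1))) => ∑ k ∈ s, rexp (-((y.1 - (k : ℝ)) ^ 2 + ‖y.2‖ ^ 2) / (4 * τ)) •
        ((2 * τ)⁻¹ • ((y.1 - (k : ℝ), y.2) : ℝ × EuclideanSpace ℝ (Fin (d - 1)))))
    · intro s
      exact Finset.measurable_sum s (fun k _ => (hw k).measurable)
    · rw [tendsto_pi_nhds]
      intro y
      exact (summable_term _ hτ y).hasSum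
  exact hmeas.const_smul (-((4 * π * τ) ^ (-(d : ℝ) / 2)))


lemma summable_exp_mdist_div {s : ℝ} (hs : 0 < s) :
    Summable fun k : ℤ => rexp (-(mdist k ^ 2 / s)) := by
  have := summable_exp_mdist (inv_pos.mpr hs)
  apply this.congr
  intro k
  rw [div_eq_inv_mul]

lemma Sfun_pos {τ : ℝ} (hτ : 0 < τ) (t : ℝ) : 0 < Sfun τ t := by
  have h := Summable.le_tsum (summable_exp_shift_div (show (0:ℝ) < 8 * τ by positivity) t) 0
    (fun j _ => (exp_pos _).le)
  exact lt_of_lt_of_le (exp_pos _) h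

lemma Sfun_le {τ T : ℝ} (hτ : 0 < τ) (hτT : τ ≤ T) {t : ℝ} (ht0 : 0 ≤ t) (ht1 : t ≤ 1) :
    Sfun τ t ≤ ∑' k : ℤ, rexp (-(mdist k ^ 2 / (8 * T))) := by
  have hT : 0 < T := lt_of_lt_of_le hτ hτT
  apply Summable.tsum_le_tsum _ (summable_exp_shift_div (by positivity) t)
    (summable_exp_mdist_div (by positivity))
  intro k
  apply Real.exp_le_exp.mpr
  have h1 : mdist k ^ 2 ≤ (t - (k : ℝ)) ^ 2 := by
    rw [← sq_abs (t - (k : ℝ))]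
    exact pow_le_pow_left₀ (mdist_nonneg k) (mdist_le_abs ht0 ht1) 2
  have h2 : mdist k ^ 2 / (8 * T) ≤ (t - (k : ℝ)) ^ 2 / (8 * τ) :=
    div_le_div₀ (sq_nonneg _) h1 (by positivity) (by linarith)
  linarith

lemma exp_split_k {τ T t : ℝ} (hτ : 0 < τ) (hτT : τ ≤ T) (ht0 : 0 ≤ t) (ht1 : t ≤ 1) (k : ℤ) :
    rexp (-((t - (k : ℝ)) ^ 2 / (8 * τ))) ≤
      rexp (-(mdist k ^ 2 / (16 * T))) * rexp (-((t - (k : ℝ)) ^ 2 / (16 * τ))) := by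
  have hT : 0 < T := lt_of_lt_of_le hτ hτT
  rw [← Real.exp_add]
  apply Real.exp_le_exp.mpr
  have h1 : mdist k ^ 2 ≤ (t - (k : ℝ)) ^ 2 := by
    rw [← sq_abs (t - (k : ℝ))]
    exact pow_le_pow_left₀ (mdist_nonneg k) (mdist_le_abs ht0 ht1) 2
  have h2 : mdist k ^ 2 / (16 * T) ≤ (t - (k : ℝ)) ^ 2 / (16 * τ) :=
    div_le_div₀ (sq_nonneg _) h1 (by positivity) (by linarith)
  have h3 : (t - (k : ℝ)) ^ 2 / (8 * τ) =
      (t - (k : ℝ)) ^ 2 / (16 * τ) + (t - (k : ℝ)) ^ 2 / (16 * τ) := by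
    field_simp
    ring
  linarith

lemma weight_le {lam T τ r : ℝ} (hlam : 0 < lam) (hτ : 0 < τ) (hτT : τ ≤ T) (hr : 0 ≤ r) :
    (1 + r ^ (2 * lam)) * rexp (-(r ^ 2 / (8 * τ))) ≤
      (2 + (⌈lam⌉₊ : ℝ) ^ (⌈lam⌉₊ : ℕ) * (16 * T) ^ (⌈lam⌉₊ : ℕ)) *
        rexp (-(r ^ 2 / (16 * τ))) := by
  have hT : 0 < T := lt_of_lt_of_le hτ hτT
  set n : ℕ := ⌈lam⌉₊ with hn
  have hn1 : 1 ≤ n := Nat.one_le_ceil_iff.mpr hlam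
  have hsplit : rexp (-(r ^ 2 / (8 * τ))) =
      rexp (-(r ^ 2 / (16 * τ))) * rexp (-(r ^ 2 / (16 * τ))) := by
    rw [← Real.exp_add]
    congr 1
    field_simp
    ring
  have key : (1 + r ^ (2 * lam)) * rexp (-(r ^ 2 / (16 * τ))) ≤
      2 + (n : ℝ) ^ n * (16 * T) ^ n := by
    rcases le_or_gt r 1 with h | h
    · have h1 : r ^ (2 * lam) ≤ 1 := Real.rpow_le_one hr h (by positivity)
      have h2 : rexp (-(r ^ 2 / (16 * τ))) ≤ 1 :=
        exp_le_one_iff.mpr (neg_nonpos.mpr (by positivity))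
      nlinarith [exp_pos (-(r ^ 2 / (16 * τ))), pow_nonneg (Nat.cast_nonneg (α := ℝ) n) n,
        pow_nonneg (show (0:ℝ) ≤ 16 * T by positivity) n]
    · set v : ℝ := r ^ 2 / (16 * τ) with hv
      have hv0 : 0 ≤ v := by positivity
      have hr2 : r ^ 2 = 16 * τ * v := by rw [hv]; field_simp
      have h1 : r ^ (2 * lam) ≤ (r ^ 2) ^ n := by
        have hle : 2 * lam ≤ ((2 * n : ℕ) : ℝ) := by
          push_cast
          have := Nat.le_ceil lam
          linarith
        calc r ^ (2 * lam) ≤ r ^ ((2 * n : ℕ) : ℝ) :=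
              Real.rpow_le_rpow_of_exponent_le h.le hle
          _ = r ^ (2 * n : ℕ) := Real.rpow_natCast r (2 * n)
          _ = (r ^ 2) ^ n := by rw [pow_mul]
      have h2 : (r ^ 2) ^ n * rexp (-v) ≤ (n : ℝ) ^ n * (16 * T) ^ n := by
        rw [hr2, mul_pow]
        calc (16 * τ) ^ n * v ^ n * rexp (-v) = (16 * τ) ^ n * (v ^ n * rexp (-v)) := by ring
          _ ≤ (16 * T) ^ n * (n : ℝ) ^ n := by
              apply mul_le_mul (pow_le_pow_left₀ (by positivity) (by linarith) n)
                (pow_mul_exp_neg_le hv0 hn1) (by positivity) (by positivity)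
          _ = (n : ℝ) ^ n * (16 * T) ^ n := by ring
      have h3 : rexp (-v) ≤ 1 := exp_le_one_iff.mpr (neg_nonpos.mpr hv0)
      have h4 : (1 + r ^ (2 * lam)) * rexp (-v) =
          rexp (-v) + r ^ (2 * lam) * rexp (-v) := by ring
      have h5 : r ^ (2 * lam) * rexp (-v) ≤ (r ^ 2) ^ n * rexp (-v) :=
        mul_le_mul_of_nonneg_right h1 (exp_pos _).le
      rw [hv] at h4 ⊢
      linarith
  calc (1 + r ^ (2 * lam)) * rexp (-(r ^ 2 / (8 * τ)))
      = (1 + r ^ (2 * lam)) * rexp (-(r ^ 2 / (16 * τ))) * rexp (-(r ^ 2 / (16 * τ))) := by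
        rw [hsplit]; ring
    _ ≤ (2 + (n : ℝ) ^ n * (16 * T) ^ n) * rexp (-(r ^ 2 / (16 * τ))) :=
        mul_le_mul_of_nonneg_right key (exp_pos _).le

lemma lintegral_line {s : ℝ} (hs : 0 < s) (k : ℤ) :
    (∫⁻ t : ℝ, ENNReal.ofReal (rexp (-((t - (k : ℝ)) ^ 2 / s)))) =
      ENNReal.ofReal (Real.sqrt (π * s)) := by
  have heq : (fun t : ℝ => rexp (-((t - (k : ℝ)) ^ 2 / s))) =
      fun t : ℝ => rexp (-(s⁻¹ * (t - (k : ℝ)) ^ 2)) := by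
    funext t; rw [div_eq_inv_mul]
  have hint0 : Integrable (fun t : ℝ => rexp (-(s⁻¹ * t ^ 2))) := by
    simpa [neg_mul] using integrable_exp_neg_mul_sq (inv_pos.mpr hs)
  have hint : Integrable (fun t : ℝ => rexp (-((t - (k : ℝ)) ^ 2 / s))) := by
    rw [heq]
    exact hint0.comp_sub_right (k : ℝ)
  rw [← ofReal_integral_eq_lintegral_ofReal hint (ae_of_all _ fun t => (exp_pos _).le)]
  congr 1
  rw [heq]
  rw [integral_sub_right_eq_self (fun t : ℝ => rexp (-(s⁻¹ * t ^ 2))) ((k : ℝ))]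
  have : (fun t : ℝ => rexp (-(s⁻¹ * t ^ 2))) = fun t : ℝ => rexp (-s⁻¹ * t ^ 2) := by
    funext t; rw [neg_mul]
  rw [this, integral_gaussian]
  congr 1
  rw [div_eq_mul_inv, inv_inv]

lemma lintegral_gauss_euclid (m : ℕ) {s : ℝ} (hs : 0 < s) :
    (∫⁻ z : EuclideanSpace ℝ (Fin m), ENNReal.ofReal (rexp (-(‖z‖ ^ 2 / s)))) =
      ENNReal.ofReal ((π * s) ^ ((m : ℝ) / 2)) := by
  have hb : (0:ℝ) < s⁻¹ := inv_pos.mpr hs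
  have heq : (fun z : EuclideanSpace ℝ (Fin m) => rexp (-(‖z‖ ^ 2 / s))) =
      fun z : EuclideanSpace ℝ (Fin m) => rexp (-s⁻¹ * ‖z‖ ^ 2) := by
    funext z; rw [div_eq_inv_mul, neg_mul]
  have hC : Integrable (fun v : EuclideanSpace ℝ (Fin m) =>
      Complex.exp (-(s⁻¹ : ℂ) * ‖v‖ ^ 2)) := by
    simpa using GaussianFourier.integrable_cexp_neg_mul_sq_norm_add
      (show (0:ℝ) < ((s⁻¹ : ℂ)).re by simpa using hb) 0 (0 : EuclideanSpace ℝ (Fin m))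
  have hR : Integrable (fun v : EuclideanSpace ℝ (Fin m) => rexp (-s⁻¹ * ‖v‖ ^ 2)) := by
    have := hC.re
    apply this.congr
    filter_upwards with v
    rw [show (-(s⁻¹ : ℂ) * (‖v‖ : ℂ) ^ 2) = ((-s⁻¹ * ‖v‖ ^ 2 : ℝ) : ℂ) by push_cast; ring]
    exact Complex.exp_ofReal_re _
  have hstep : (∫⁻ z : EuclideanSpace ℝ (Fin m), ENNReal.ofReal (rexp (-(‖z‖ ^ 2 / s)))) =
      ∫⁻ z : EuclideanSpace ℝ (Fin m), ENNReal.ofReal (rexp (-s⁻¹ * ‖z‖ ^ 2)) := by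
    apply lintegral_congr
    intro z
    rw [div_eq_inv_mul, neg_mul]
  rw [hstep, ← ofReal_integral_eq_lintegral_ofReal hR (ae_of_all _ fun z => (exp_pos _).le)]
  congr 1
  have hval := GaussianFourier.integral_rexp_neg_mul_sq_norm hb (V := EuclideanSpace ℝ (Fin m))
  simp only [neg_mul] at hval ⊢
  rw [hval, finrank_euclideanSpace_fin, div_eq_mul_inv, inv_inv]

lemma ofReal_Sfun {τ : ℝ} (hτ : 0 < τ) (t : ℝ) :
    ENNReal.ofReal (Sfun τ t) =
      ∑' k : ℤ, ENNReal.ofReal (rexp (-((t - (k : ℝ)) ^ 2 / (8 * τ)))) :=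
  ENNReal.ofReal_tsum_of_nonneg (fun k => (exp_pos _).le)
    (summable_exp_shift_div (by positivity) t)

lemma final_arith (d : ℕ) (hd : 2 ≤ d) {τ q : ℝ} (hτ : 0 < τ) (hq : 1 ≤ q) :
    τ ^ (-(q * ((d : ℝ) + 1) / 2)) *
        ((π * (16 * τ)) ^ ((1:ℝ) / 2) * (π * (16 * τ)) ^ (((d - 1 : ℕ) : ℝ) / 2)) =
      (16 * π) ^ ((d : ℝ) / 2) * τ ^ (q * (-(((d : ℝ) + 1) / 2 - (d : ℝ) / (2 * q)))) := by
  have hq0 : (0:ℝ) < q := by linarith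
  have hπτ : (0:ℝ) < π * (16 * τ) := by positivity
  have hcast : ((d - 1 : ℕ) : ℝ) = (d : ℝ) - 1 := by
    have h1 : (1:ℕ) ≤ d := by omega
    push_cast [Nat.cast_sub h1]
    ring
  rw [hcast, ← Real.rpow_add hπτ,
    show (1:ℝ) / 2 + ((d : ℝ) - 1) / 2 = (d : ℝ) / 2 by ring,
    show π * (16 * τ) = (16 * π) * τ by ring,
    Real.mul_rpow (by positivity) hτ.le]
  calc τ ^ (-(q * ((d : ℝ) + 1) / 2)) * ((16 * π) ^ ((d : ℝ) / 2) * τ ^ ((d : ℝ) / 2))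
      = (16 * π) ^ ((d : ℝ) / 2) * (τ ^ (-(q * ((d : ℝ) + 1) / 2)) * τ ^ ((d : ℝ) / 2)) := by
        ring
    _ = (16 * π) ^ ((d : ℝ) / 2) * τ ^ (-(q * ((d : ℝ) + 1) / 2) + (d : ℝ) / 2) := by
        rw [← Real.rpow_add hτ]
    _ = (16 * π) ^ ((d : ℝ) / 2) * τ ^ (q * (-(((d : ℝ) + 1) / 2 - (d : ℝ) / (2 * q)))) := by
        have hexp : -(q * ((d : ℝ) + 1) / 2) + (d : ℝ) / 2 =
            q * (-(((d : ℝ) + 1) / 2 - (d : ℝ) / (2 * q))) := by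
          field_simp
          ring
        rw [hexp]

lemma pointwise_bound (d : ℕ) {lam T τ q : ℝ} (hlam : 0 < lam)
    (hτ : 0 < τ) (hτT : τ ≤ T) (hq : 1 ≤ q)
    (y : ℝ × EuclideanSpace ℝ (Fin (d - 1))) (hy0 : 0 ≤ y.1) (hy1 : y.1 ≤ 1) :
    pairNorm (gradCylHeatKernel d τ y) ^ q * (1 + ‖y.2‖ ^ (2 * lam)) ≤
      ((2 * (4 * π) ^ (-(d : ℝ) / 2)) ^ q * τ ^ (-(q * ((d : ℝ) + 1) / 2)) *
          (∑' k : ℤ, rexp (-(mdist k ^ 2 / (8 * T)))) ^ (q - 1) *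
          (2 + (⌈lam⌉₊ : ℝ) ^ (⌈lam⌉₊ : ℕ) * (16 * T) ^ (⌈lam⌉₊ : ℕ))) *
        Sfun τ y.1 * rexp (-(‖y.2‖ ^ 2 / (16 * τ))) := by
  have hT : 0 < T := lt_of_lt_of_le hτ hτT
  set Cd : ℝ := 2 * (4 * π) ^ (-(d : ℝ) / 2) with hCd
  have hCd0 : 0 < Cd := by positivity
  set S : ℝ := Sfun τ y.1 with hS
  have hSpos : 0 < S := Sfun_pos hτ _
  set M : ℝ := ∑' k : ℤ, rexp (-(mdist k ^ 2 / (8 * T))) with hM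
  have hSM : S ≤ M := Sfun_le hτ hτT hy0 hy1
  have hM0 : 0 < M := lt_of_lt_of_le hSpos hSM
  set E8 : ℝ := rexp (-(‖y.2‖ ^ 2 / (8 * τ))) with hE8
  set W : ℝ := 1 + ‖y.2‖ ^ (2 * lam) with hW
  have hW0 : 0 ≤ W := by rw [hW]; positivity
  set a : ℝ := -((d : ℝ) + 1) / 2 with ha
  have h1 : pairNorm (gradCylHeatKernel d τ y) ≤ Cd * τ ^ a * (E8 * S) :=
    pairNorm_grad_le d hτ y
  have hq0 : (0:ℝ) ≤ q := by linarith
  have h2 : pairNorm (gradCylHeatKernel d τ y) ^ q ≤ (Cd * τ ^ a * (E8 * S)) ^ q :=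
    Real.rpow_le_rpow (pairNorm_nonneg _) h1 hq0
  have h3 : (Cd * τ ^ a * (E8 * S)) ^ q = Cd ^ q * (τ ^ a) ^ q * (E8 ^ q * S ^ q) := by
    rw [Real.mul_rpow (by positivity) (by positivity),
      Real.mul_rpow hCd0.le (by positivity),
      Real.mul_rpow (exp_pos _).le hSpos.le]
  have h4 : (τ ^ a) ^ q = τ ^ (-(q * ((d : ℝ) + 1) / 2)) := by
    rw [← Real.rpow_mul hτ.le]
    congr 1
    rw [ha]; ring
  have h5 : E8 ^ q ≤ E8 := by
    rw [hE8, ← Real.exp_mul]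
    apply Real.exp_le_exp.mpr
    have hx : -(‖y.2‖ ^ 2 / (8 * τ)) ≤ 0 := neg_nonpos.mpr (by positivity)
    nlinarith
  have h6 : S ^ q ≤ M ^ (q - 1) * S := by
    calc S ^ q = S ^ (q - 1) * S := by
          rw [← Real.rpow_add_one hSpos.ne' (q - 1)]
          congr 1
          ring
      _ ≤ M ^ (q - 1) * S :=
          mul_le_mul_of_nonneg_right
            (Real.rpow_le_rpow hSpos.le hSM (by linarith)) hSpos.le
  have h7 : W * E8 ≤ (2 + (⌈lam⌉₊ : ℝ) ^ (⌈lam⌉₊ : ℕ) * (16 * T) ^ (⌈lam⌉₊ : ℕ)) *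
      rexp (-(‖y.2‖ ^ 2 / (16 * τ))) := weight_le hlam hτ hτT (norm_nonneg _)
  set C₂ : ℝ := 2 + (⌈lam⌉₊ : ℝ) ^ (⌈lam⌉₊ : ℕ) * (16 * T) ^ (⌈lam⌉₊ : ℕ) with hC₂
  have hE8q0 : 0 ≤ E8 ^ q := Real.rpow_nonneg (exp_pos _).le q
  calc pairNorm (gradCylHeatKernel d τ y) ^ q * W
      ≤ (Cd * τ ^ a * (E8 * S)) ^ q * W := mul_le_mul_of_nonneg_right h2 hW0
    _ = Cd ^ q * (τ ^ a) ^ q * (E8 ^ q * S ^ q) * W := by rw [h3]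
    _ ≤ Cd ^ q * (τ ^ a) ^ q * (E8 * (M ^ (q - 1) * S)) * W := by
        apply mul_le_mul_of_nonneg_right _ hW0
        apply mul_le_mul_of_nonneg_left _ (by positivity)
        exact mul_le_mul h5 h6 (Real.rpow_nonneg hSpos.le q) (exp_pos _).le
    _ = Cd ^ q * (τ ^ a) ^ q * M ^ (q - 1) * S * (W * E8) := by ring
    _ ≤ Cd ^ q * (τ ^ a) ^ q * M ^ (q - 1) * S *
          (C₂ * rexp (-(‖y.2‖ ^ 2 / (16 * τ)))) := by
        apply mul_le_mul_of_nonneg_left h7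
        have : (0:ℝ) ≤ M ^ (q - 1) := Real.rpow_nonneg hM0.le _
        positivity
    _ = Cd ^ q * (τ ^ a) ^ q * M ^ (q - 1) * C₂ * S * rexp (-(‖y.2‖ ^ 2 / (16 * τ))) := by
        ring
    _ = (Cd ^ q * τ ^ (-(q * ((d : ℝ) + 1) / 2)) * M ^ (q - 1) * C₂) * S *
          rexp (-(‖y.2‖ ^ 2 / (16 * τ))) := by rw [h4]

end Stmt6Aux

open Stmt6Aux

/-- For `d ≥ 2`, `λ > (d-1)/2`, `T > 0` and `q ≥ 1`, with
`π(y) = 1 + |y^{2…d}|^{2λ}`, there is a constant `K` (depending only on `d, λ, q, T`)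
such that for all `τ ∈ (0,T]`,
`(∫_{[0,1)×ℝ^{d-1}} |∇G_τ(y)|^q π(y) dy)^{1/q} ≤ K τ^{-((d+1)/2 - d/(2q))}`. -/
theorem stmt6 (d : ℕ) (hd : 2 ≤ d) (lam : ℝ) (hlam : ((d : ℝ) - 1) / 2 < lam)
    (T : ℝ) (hT : 0 < T) (q : ℝ) (hq : 1 ≤ q) :
    ∃ K : ℝ, 0 < K ∧
      ∀ τ ∈ Set.Ioc (0:ℝ) T,
        (∫ y, pairNorm (gradCylHeatKernel d τ y) ^ q * (1 + ‖y.2‖ ^ (2 * lam))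
            ∂(cylMeasure (d - 1))) ^ (1 / q) ≤
          K * τ ^ (-(((d : ℝ) + 1) / 2 - (d : ℝ) / (2 * q))) := by
  have hlam0 : 0 < lam := by
    have : (0:ℝ) ≤ ((d : ℝ) - 1) / 2 := by
      have : (2:ℝ) ≤ (d : ℝ) := by exact_mod_cast hd
      linarith
    linarith
  have hq0 : (0:ℝ) < q := by linarith
  set n : ℕ := ⌈lam⌉₊ with hn
  set Cd : ℝ := 2 * (4 * π) ^ (-(d : ℝ) / 2) with hCd
  have hCd0 : 0 < Cd := by positivity
  set M : ℝ := ∑' k : ℤ, rexp (-(mdist k ^ 2 / (8 * T))) with hM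
  have hM0 : 0 < M := by
    have h := Summable.le_tsum (summable_exp_mdist_div (show (0:ℝ) < 8 * T by positivity)) 0
      (fun j _ => (exp_pos _).le)
    exact lt_of_lt_of_le (exp_pos _) h
  set C₂ : ℝ := 2 + (n : ℝ) ^ n * (16 * T) ^ n with hC₂
  have hC₂0 : 0 < C₂ := by positivity
  set M₂ : ℝ := ∑' k : ℤ, rexp (-(mdist k ^ 2 / (16 * T))) with hM₂
  have hM₂0 : 0 < M₂ := by
    have h := Summable.le_tsum (summable_exp_mdist_div (show (0:ℝ) < 16 * T by positivity)) 0
      (fun j _ => (exp_pos _).le)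
    exact lt_of_lt_of_le (exp_pos _) h
  set K₀ : ℝ := Cd ^ q * M ^ (q - 1) * C₂ * M₂ * (16 * π) ^ ((d : ℝ) / 2) with hK₀
  have hK₀0 : 0 < K₀ := by
    have h1 : (0:ℝ) < Cd ^ q := Real.rpow_pos_of_pos hCd0 q
    have h2 : (0:ℝ) < M ^ (q - 1) := Real.rpow_pos_of_pos hM0 _
    have h3 : (0:ℝ) < (16 * π) ^ ((d : ℝ) / 2) := Real.rpow_pos_of_pos (by positivity) _
    positivity
  refine ⟨K₀ ^ (1 / q), Real.rpow_pos_of_pos hK₀0 _, ?_⟩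
  rintro τ ⟨hτ, hτT⟩
  set e₁ : ℝ := -(((d : ℝ) + 1) / 2 - (d : ℝ) / (2 * q)) with he₁
  set F : ℝ × EuclideanSpace ℝ (Fin (d - 1)) → ℝ :=
    fun y => pairNorm (gradCylHeatKernel d τ y) ^ q * (1 + ‖y.2‖ ^ (2 * lam)) with hF
  have hFnn : ∀ y, 0 ≤ F y := by
    intro y
    rw [hF]
    have := pairNorm_nonneg (gradCylHeatKernel d τ y)
    positivity
  have hFmeas : Measurable F := by
    have hpn : Continuous fun p : ℝ × EuclideanSpace ℝ (Fin (d - 1)) => pairNorm p := by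
      unfold pairNorm
      apply Real.continuous_sqrt.comp
      fun_prop
    have h1 : Measurable fun y => pairNorm (gradCylHeatKernel d τ y) ^ q :=
      (Real.continuous_rpow_const hq0.le).measurable.comp
        (hpn.measurable.comp (measurable_grad d hτ))
    have h2 : Measurable fun y : ℝ × EuclideanSpace ℝ (Fin (d - 1)) =>
        1 + ‖y.2‖ ^ (2 * lam) :=
      measurable_const.add
        ((Real.continuous_rpow_const (by positivity)).measurable.comp
          measurable_snd.norm)
    exact h1.mul h2
  set D : ℝ := Cd ^ q * τ ^ (-(q * ((d : ℝ) + 1) / 2)) * M ^ (q - 1) * C₂ with hD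
  have hD0 : 0 < D := by
    have h1 : (0:ℝ) < Cd ^ q := Real.rpow_pos_of_pos hCd0 q
    have h2 : (0:ℝ) < M ^ (q - 1) := Real.rpow_pos_of_pos hM0 _
    have h3 : (0:ℝ) < τ ^ (-(q * ((d : ℝ) + 1) / 2)) := Real.rpow_pos_of_pos hτ _
    positivity
  -- measurability of the ENNReal-valued pieces
  have hSmeas : Measurable fun t : ℝ => ENNReal.ofReal (Sfun τ t) := by
    have : (fun t : ℝ => ENNReal.ofReal (Sfun τ t)) =
        fun t => ∑' k : ℤ, ENNReal.ofReal (rexp (-((t - (k : ℝ)) ^ 2 / (8 * τ)))) := by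
      funext t
      exact ofReal_Sfun hτ t
    rw [this]
    apply Measurable.ennreal_tsum
    intro k
    apply Measurable.ennreal_ofReal
    fun_prop
  have hgmeas : Measurable fun z : EuclideanSpace ℝ (Fin (d - 1)) =>
      ENNReal.ofReal (rexp (-(‖z‖ ^ 2 / (16 * τ)))) := by
    apply Measurable.ennreal_ofReal
    fun_prop
  -- the main integral bound
  have hmain : (∫ y, F y ∂(cylMeasure (d - 1))) ≤ K₀ * τ ^ (q * e₁) := by
    rw [integral_eq_lintegral_of_nonneg_ae (ae_of_all _ hFnn)
      hFmeas.aestronglyMeasurable]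
    apply ENNReal.toReal_le_of_le_ofReal
    · exact (mul_pos hK₀0 (Real.rpow_pos_of_pos hτ _)).le
    have hae : ∀ᵐ y ∂(cylMeasure (d - 1)), y.1 ∈ Set.Ico (0:ℝ) 1 := by
      rw [ae_iff]
      have hset : {y : ℝ × EuclideanSpace ℝ (Fin (d - 1)) | ¬ y.1 ∈ Set.Ico (0:ℝ) 1} =
          (Set.Ico (0:ℝ) 1)ᶜ ×ˢ (Set.univ : Set (EuclideanSpace ℝ (Fin (d - 1)))) := by
        ext y
        simp [Set.mem_prod]
      rw [hset]
      simp only [cylMeasure]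
      rw [ Measure.prod_prod,
        Measure.restrict_apply measurableSet_Ico.compl]
      simp
    set μ := cylMeasure (d - 1) with hμ
    set A : ENNReal := ∫⁻ t in Set.Ico (0:ℝ) 1, ENNReal.ofReal (D * Sfun τ t) with hA
    set B : ENNReal := ∫⁻ z : EuclideanSpace ℝ (Fin (d - 1)),
      ENNReal.ofReal (rexp (-(‖z‖ ^ 2 / (16 * τ)))) with hB
    have step1 : (∫⁻ y, ENNReal.ofReal (F y) ∂μ) ≤
        ∫⁻ y, ENNReal.ofReal (D * Sfun τ y.1) *
          ENNReal.ofReal (rexp (-(‖y.2‖ ^ 2 / (16 * τ)))) ∂μ := by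
      apply lintegral_mono_ae
      filter_upwards [hae] with y hy
      rw [← ENNReal.ofReal_mul (mul_nonneg hD0.le (Sfun_pos hτ _).le)]
      apply ENNReal.ofReal_le_ofReal
      have hpb := pointwise_bound d hlam0 hτ hτT hq y hy.1 hy.2.le
      simp only [hF, hD, hCd, hM, hC₂, hn]
      exact hpb
    have step2 : (∫⁻ y, ENNReal.ofReal (D * Sfun τ y.1) *
        ENNReal.ofReal (rexp (-(‖y.2‖ ^ 2 / (16 * τ)))) ∂μ) = A * B := by
      rw [hμ, hA, hB]
      simp only [cylMeasure]
      have hfm : Measurable (fun t : ℝ => ENNReal.ofReal (D * Sfun τ t)) := by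
        have hfun : (fun t : ℝ => ENNReal.ofReal (D * Sfun τ t)) =
            fun t => ENNReal.ofReal D * ENNReal.ofReal (Sfun τ t) := by
          funext t
          rw [ENNReal.ofReal_mul hD0.le]
        rw [hfun]
        exact hSmeas.const_mul _
      exact lintegral_prod_mul (f := fun t : ℝ => ENNReal.ofReal (D * Sfun τ t))
        (g := fun z : EuclideanSpace ℝ (Fin (d - 1)) =>
          ENNReal.ofReal (rexp (-(‖z‖ ^ 2 / (16 * τ)))))
        hfm.aemeasurable hgmeas.aemeasurable
    have t1 : (∫⁻ t in Set.Ico (0:ℝ) 1, ENNReal.ofReal (Sfun τ t)) =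
        ∑' k : ℤ, ∫⁻ t in Set.Ico (0:ℝ) 1,
          ENNReal.ofReal (rexp (-((t - (k : ℝ)) ^ 2 / (8 * τ)))) := by
      rw [← lintegral_tsum (fun k => (Measurable.ennreal_ofReal (by fun_prop)).aemeasurable)]
      apply lintegral_congr
      intro t
      exact ofReal_Sfun hτ t
    have t2 : ∀ k : ℤ, (∫⁻ t in Set.Ico (0:ℝ) 1,
        ENNReal.ofReal (rexp (-((t - (k : ℝ)) ^ 2 / (8 * τ))))) ≤
        ENNReal.ofReal (rexp (-(mdist k ^ 2 / (16 * T)))) *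
          ENNReal.ofReal (Real.sqrt (π * (16 * τ))) := by
      intro k
      have u1 : (∫⁻ t in Set.Ico (0:ℝ) 1,
          ENNReal.ofReal (rexp (-((t - (k : ℝ)) ^ 2 / (8 * τ))))) ≤
          ∫⁻ t in Set.Ico (0:ℝ) 1,
            ENNReal.ofReal (rexp (-(mdist k ^ 2 / (16 * T)))) *
              ENNReal.ofReal (rexp (-((t - (k : ℝ)) ^ 2 / (16 * τ)))) := by
        apply lintegral_mono_ae
        filter_upwards [ae_restrict_mem measurableSet_Ico] with t ht
        rw [← ENNReal.ofReal_mul (exp_pos _).le]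
        exact ENNReal.ofReal_le_ofReal (exp_split_k hτ hτT ht.1 ht.2.le k)
      have u2 : (∫⁻ t in Set.Ico (0:ℝ) 1,
          ENNReal.ofReal (rexp (-(mdist k ^ 2 / (16 * T)))) *
            ENNReal.ofReal (rexp (-((t - (k : ℝ)) ^ 2 / (16 * τ))))) =
          ENNReal.ofReal (rexp (-(mdist k ^ 2 / (16 * T)))) *
            ∫⁻ t in Set.Ico (0:ℝ) 1,
              ENNReal.ofReal (rexp (-((t - (k : ℝ)) ^ 2 / (16 * τ)))) :=
        lintegral_const_mul' _ _ ENNReal.ofReal_ne_top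
      have u3 : (∫⁻ t in Set.Ico (0:ℝ) 1,
          ENNReal.ofReal (rexp (-((t - (k : ℝ)) ^ 2 / (16 * τ))))) ≤
          ENNReal.ofReal (Real.sqrt (π * (16 * τ))) := by
        rw [← lintegral_line (show (0:ℝ) < 16 * τ by positivity) k]
        exact lintegral_mono' Measure.restrict_le_self le_rfl
      refine u1.trans ?_
      rw [u2]
      exact mul_le_mul_right u3 _
    have t3 : (∑' k : ℤ, ENNReal.ofReal (rexp (-(mdist k ^ 2 / (16 * T)))) *
        ENNReal.ofReal (Real.sqrt (π * (16 * τ)))) =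
        ENNReal.ofReal (M₂ * Real.sqrt (π * (16 * τ))) := by
      rw [ENNReal.tsum_mul_right, ENNReal.ofReal_mul hM₂0.le]
      congr 1
      rw [hM₂]
      exact (ENNReal.ofReal_tsum_of_nonneg (fun k => (exp_pos _).le)
        (summable_exp_mdist_div (by positivity))).symm
    have step3 : (∫⁻ t in Set.Ico (0:ℝ) 1, ENNReal.ofReal (Sfun τ t)) ≤
        ENNReal.ofReal (M₂ * Real.sqrt (π * (16 * τ))) := by
      rw [t1]
      exact le_trans (ENNReal.tsum_le_tsum t2) (le_of_eq t3)
    have hpull : A = ENNReal.ofReal D *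
        ∫⁻ t in Set.Ico (0:ℝ) 1, ENNReal.ofReal (Sfun τ t) := by
      rw [hA, ← lintegral_const_mul' _ _ ENNReal.ofReal_ne_top]
      apply lintegral_congr
      intro t
      rw [ENNReal.ofReal_mul hD0.le]
    have stepA : A ≤ ENNReal.ofReal D * ENNReal.ofReal (M₂ * Real.sqrt (π * (16 * τ))) := by
      rw [hpull]
      exact mul_le_mul_right step3 _
    have stepB : B = ENNReal.ofReal ((π * (16 * τ)) ^ (((d - 1 : ℕ) : ℝ) / 2)) := by
      rw [hB]
      exact lintegral_gauss_euclid (d - 1) (show (0:ℝ) < 16 * τ by positivity)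
    have step5 : A * B ≤ ENNReal.ofReal (K₀ * τ ^ (q * e₁)) := by
      have h5 : A * B ≤ (ENNReal.ofReal D * ENNReal.ofReal (M₂ * Real.sqrt (π * (16 * τ)))) *
          ENNReal.ofReal ((π * (16 * τ)) ^ (((d - 1 : ℕ) : ℝ) / 2)) := by
        rw [stepB]
        exact mul_le_mul_left stepA _
      refine h5.trans ?_
      rw [← ENNReal.ofReal_mul hD0.le,
        ← ENNReal.ofReal_mul (mul_nonneg hD0.le (mul_nonneg hM₂0.le (Real.sqrt_nonneg _)))]
      apply ENNReal.ofReal_le_ofReal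
      apply le_of_eq
      have harith := final_arith d hd hτ hq
      rw [he₁]
      calc D * (M₂ * Real.sqrt (π * (16 * τ))) *
            (π * (16 * τ)) ^ (((d - 1 : ℕ) : ℝ) / 2)
          = (Cd ^ q * M ^ (q - 1) * C₂ * M₂) *
              (τ ^ (-(q * ((d : ℝ) + 1) / 2)) *
                ((π * (16 * τ)) ^ ((1:ℝ) / 2) *
                  (π * (16 * τ)) ^ (((d - 1 : ℕ) : ℝ) / 2))) := by
            rw [hD, Real.sqrt_eq_rpow]
            ring
        _ = (Cd ^ q * M ^ (q - 1) * C₂ * M₂) *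
              ((16 * π) ^ ((d : ℝ) / 2) *
                τ ^ (q * (-(((d : ℝ) + 1) / 2 - (d : ℝ) / (2 * q))))) := by
            rw [harith]
        _ = K₀ * τ ^ (q * (-(((d : ℝ) + 1) / 2 - (d : ℝ) / (2 * q)))) := by
            rw [hK₀]
            ring
    exact le_trans (le_trans step1 (le_of_eq step2)) step5
  -- conclude
  have hFint_nn : 0 ≤ ∫ y, F y ∂(cylMeasure (d - 1)) := integral_nonneg hFnn
  calc (∫ y, F y ∂(cylMeasure (d - 1))) ^ (1 / q)
      ≤ (K₀ * τ ^ (q * e₁)) ^ (1 / q) :=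
        Real.rpow_le_rpow hFint_nn hmain (by positivity)
    _ = K₀ ^ (1 / q) * τ ^ e₁ := by
        rw [Real.mul_rpow hK₀0.le (Real.rpow_nonneg hτ.le _),
          ← Real.rpow_mul hτ.le]
        congr 1
        rw [mul_comm q e₁, mul_assoc, mul_one_div, div_self hq0.ne', mul_one]
end

section
/- Let d ≥ 2, λ > 0 and q ≥ 1, and set w(x) = (1+|x^{2…d}|²)^λ and π(y) = (1+|y^{2…d}|²)^λ for x, y ∈ ℝ^d. Let f, h : ℝ^d → [0,∞] be measurable and ℤ-periodic in the first coordinate, with ∫_{[0,1)×ℝ^{d−1}} f = 1, and define the convolution (h⋆f)(x) = ∫_{[0,1)×ℝ^{d−1}} h(y) f(x−y) dy. Then ∫_{[0,1)×ℝ^{d−1}} (h⋆f)(x)^q w(x) dx ≤ 2^λ ( ∫_{[0,1)×ℝ^{d−1}} f w ) ( ∫_{[0,1)×ℝ^{d−1}} h(y)^q π(y) dy ). -/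
open MeasureTheory ENNReal

/-- 1D: integrating a 1-periodic function over a translated copy of `[0,1)`. -/
lemma aux_per_add {g : ℝ → ℝ≥0∞} (hg : Measurable g) (hper : ∀ a, g (a + 1) = g a) (c : ℝ) :
    ∫⁻ t in Set.Ico (0:ℝ) 1, g (t + c) = ∫⁻ t in Set.Ico (0:ℝ) 1, g t := by
  have hP : Function.Periodic g 1 := hper
  have hemb : MeasurableEmbedding (fun t : ℝ => t + c) :=
    (MeasurableEquiv.addRight c).measurableEmbedding
  have hmp : MeasurePreserving (fun t : ℝ => t + c) volume volume :=
    measurePreserving_add_right volume c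
  have hpre : (fun t : ℝ => t + c) ⁻¹' Set.Ioc c (c + 1) = Set.Ioc (0:ℝ) 1 := by
    ext t
    simp only [Set.mem_preimage, Set.mem_Ioc]
    constructor <;> rintro ⟨h1, h2⟩ <;> constructor <;> linarith
  rw [restrict_Ico_eq_restrict_Ioc]
  have h1 : ∫⁻ t in Set.Ioc (0:ℝ) 1, g (t + c) = ∫⁻ s in Set.Ioc c (c + 1), g s := by
    rw [← hpre, hmp.setLIntegral_comp_preimage_emb hemb]
  rw [h1]
  haveI : VAddInvariantMeasure (AddSubgroup.zmultiples (1:ℝ)) ℝ volume :=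
    ⟨fun c s _ => measure_preimage_add _ _ _⟩
  have hd1 : IsAddFundamentalDomain (AddSubgroup.zmultiples (1:ℝ)) (Set.Ioc c (c + 1)) volume :=
    isAddFundamentalDomain_Ioc one_pos c
  have hd2 : IsAddFundamentalDomain (AddSubgroup.zmultiples (1:ℝ)) (Set.Ioc (0:ℝ) 1) volume := by
    simpa using isAddFundamentalDomain_Ioc one_pos 0
  rw [hd1.setLIntegral_eq hd2 g hP.map_vadd_zmultiples]

/-- 1D: integrating a 1-periodic function composed with negation over `[0,1)`. -/
lemma aux_per_neg {g : ℝ → ℝ≥0∞} (hg : Measurable g) (hper : ∀ a, g (a + 1) = g a) :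
    ∫⁻ t in Set.Ico (0:ℝ) 1, g (-t) = ∫⁻ t in Set.Ico (0:ℝ) 1, g t := by
  have hP : Function.Periodic g 1 := hper
  have hemb : MeasurableEmbedding (fun t : ℝ => -t) :=
    (MeasurableEquiv.neg ℝ).measurableEmbedding
  have hmp : MeasurePreserving (fun t : ℝ => -t) (volume : Measure ℝ) volume :=
    Measure.measurePreserving_neg volume
  have hpre : (fun t : ℝ => -t) ⁻¹' Set.Ioc (-1 : ℝ) 0 = Set.Ico (0:ℝ) 1 := by
    ext t
    simp only [Set.mem_preimage, Set.mem_Ioc, Set.mem_Ico]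
    constructor <;> rintro ⟨h1, h2⟩ <;> constructor <;> linarith
  have h1 : ∫⁻ t in Set.Ico (0:ℝ) 1, g (-t) = ∫⁻ s in Set.Ioc (-1:ℝ) 0, g s := by
    rw [← hpre, hmp.setLIntegral_comp_preimage_emb hemb]
  rw [h1]
  haveI : VAddInvariantMeasure (AddSubgroup.zmultiples (1:ℝ)) ℝ volume :=
    ⟨fun c s _ => measure_preimage_add _ _ _⟩
  have hd1 : IsAddFundamentalDomain (AddSubgroup.zmultiples (1:ℝ)) (Set.Ioc (-1:ℝ) 0) volume := by
    simpa using isAddFundamentalDomain_Ioc one_pos (-1 : ℝ)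
  have hd2 : IsAddFundamentalDomain (AddSubgroup.zmultiples (1:ℝ)) (Set.Ioc (0:ℝ) 1) volume := by
    simpa using isAddFundamentalDomain_Ioc one_pos 0
  rw [hd1.setLIntegral_eq hd2 g hP.map_vadd_zmultiples, restrict_Ico_eq_restrict_Ioc]

lemma aux_per_sub_left {g : ℝ → ℝ≥0∞} (hg : Measurable g) (hper : ∀ a, g (a + 1) = g a)
    (c : ℝ) : ∫⁻ t in Set.Ico (0:ℝ) 1, g (c - t) = ∫⁻ t in Set.Ico (0:ℝ) 1, g t := by
  have h1 : ∀ t : ℝ, g (c - t) = (fun s => g (s + c)) (-t) := by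
    intro t; simp [neg_add_eq_sub]
  simp only [h1]
  rw [aux_per_neg (g := fun s => g (s + c))
      (hg.comp (measurable_id.add_const c)) (fun a => by simpa [add_right_comm] using hper (a + c)),
    aux_per_add hg hper c]

lemma aux_per_sub_right {g : ℝ → ℝ≥0∞} (hg : Measurable g) (hper : ∀ a, g (a + 1) = g a)
    (c : ℝ) : ∫⁻ t in Set.Ico (0:ℝ) 1, g (t - c) = ∫⁻ t in Set.Ico (0:ℝ) 1, g t := by
  simpa [sub_eq_add_neg] using aux_per_add hg hper (-c)

instance cylMeasure_sfinite (k : ℕ) : SigmaFinite (cylMeasure k) := by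
  unfold cylMeasure; infer_instance

/-- Product: integral of a periodic function against `(c.1 - x.1, c.2 - x.2)`. -/
lemma aux_trans_left (k : ℕ) {g : ℝ × EuclideanSpace ℝ (Fin k) → ℝ≥0∞} (hg : Measurable g)
    (hper : ∀ a y, g (a + 1, y) = g (a, y)) (c : ℝ × EuclideanSpace ℝ (Fin k)) :
    ∫⁻ x, g (c.1 - x.1, c.2 - x.2) ∂(cylMeasure k) = ∫⁻ x, g x ∂(cylMeasure k) := by
  have hmeas : Measurable (fun x : ℝ × EuclideanSpace ℝ (Fin k) =>
      g (c.1 - x.1, c.2 - x.2)) :=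
    hg.comp ((measurable_const.sub measurable_fst).prodMk (measurable_const.sub measurable_snd))
  rw [cylMeasure, lintegral_prod _ hmeas.aemeasurable, lintegral_prod _ hg.aemeasurable]
  have inner : ∀ a : ℝ, ∫⁻ b, g (c.1 - a, c.2 - b) = ∫⁻ b, g (c.1 - a, b) := by
    intro a
    exact (Measure.measurePreserving_sub_left volume c.2).lintegral_comp
      (hg.comp (measurable_const.prodMk measurable_id))
  simp only [inner]
  exact aux_per_sub_left (hg.lintegral_prod_right') (fun a => lintegral_congr fun b => hper a b) c.1

/-- Product: integral of a periodic function against `(x.1 - c.1, x.2 - c.2)`. -/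
lemma aux_trans_right (k : ℕ) {g : ℝ × EuclideanSpace ℝ (Fin k) → ℝ≥0∞} (hg : Measurable g)
    (hper : ∀ a y, g (a + 1, y) = g (a, y)) (c : ℝ × EuclideanSpace ℝ (Fin k)) :
    ∫⁻ x, g (x.1 - c.1, x.2 - c.2) ∂(cylMeasure k) = ∫⁻ x, g x ∂(cylMeasure k) := by
  have hmeas : Measurable (fun x : ℝ × EuclideanSpace ℝ (Fin k) =>
      g (x.1 - c.1, x.2 - c.2)) :=
    hg.comp ((measurable_fst.sub measurable_const).prodMk (measurable_snd.sub measurable_const))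
  rw [cylMeasure, lintegral_prod _ hmeas.aemeasurable, lintegral_prod _ hg.aemeasurable]
  have inner : ∀ a : ℝ, ∫⁻ b, g (a - c.1, b - c.2) = ∫⁻ b, g (a - c.1, b) := by
    intro a
    exact (measurePreserving_sub_right volume c.2).lintegral_comp
      (hg.comp (measurable_const.prodMk measurable_id))
  simp only [inner]
  exact aux_per_sub_right (hg.lintegral_prod_right') (fun a => lintegral_congr fun b => hper a b) c.1

/-- Jensen / Hölder: for a probability density `F`, `(∫ h F)^q ≤ ∫ h^q F` for `q ≥ 1`. -/
lemma aux_jensen {α : Type*} [MeasurableSpace α] (μ : Measure α) {q : ℝ} (hq : 1 ≤ q)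
    {h F : α → ℝ≥0∞} (hh : AEMeasurable h μ) (hF : AEMeasurable F μ)
    (hF1 : ∫⁻ y, F y ∂μ = 1) :
    (∫⁻ y, h y * F y ∂μ) ^ q ≤ ∫⁻ y, h y ^ q * F y ∂μ := by
  rcases eq_or_lt_of_le hq with rfl | hq1
  · simp only [ENNReal.rpow_one]; exact le_rfl
  · have hq0 : q ≠ 0 := by positivity
    set p : ℝ := q / (q - 1) with hp
    have hpq : q.HolderConjugate p := Real.HolderConjugate.conjExponent hq1
    have hkey := ENNReal.lintegral_mul_le_Lp_mul_Lq μ hpq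
      (f := fun y => h y * F y ^ (1 / q)) (g := fun y => F y ^ (1 / p))
      (hh.mul (hF.pow_const _)) (hF.pow_const _)
    have e1 : ∀ y, h y * F y = ((fun y => h y * F y ^ (1/q)) * fun y => F y ^ (1/p)) y := by
      intro y
      simp only [Pi.mul_apply]
      rw [mul_assoc, ← ENNReal.rpow_add_of_nonneg _ _ (by positivity) (one_div_nonneg.mpr hpq.symm.nonneg)]
      rw [show 1/q + 1/p = 1 by
        simpa [one_div] using hpq.inv_add_inv_eq_one]
      rw [ENNReal.rpow_one]
    have e2 : ∀ y, (h y * F y ^ (1/q)) ^ q = h y ^ q * F y := by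
      intro y
      rw [ENNReal.mul_rpow_of_nonneg _ _ (by positivity), ← ENNReal.rpow_mul,
        one_div_mul_cancel hq0, ENNReal.rpow_one]
    have e3 : ∀ y, (F y ^ (1/p)) ^ p = F y := by
      intro y
      rw [← ENNReal.rpow_mul, one_div_mul_cancel hpq.symm.ne_zero, ENNReal.rpow_one]
    have hle : ∫⁻ y, h y * F y ∂μ ≤ (∫⁻ y, h y ^ q * F y ∂μ) ^ (1/q) := by
      calc ∫⁻ y, h y * F y ∂μ
          = ∫⁻ y, ((fun y => h y * F y ^ (1/q)) * fun y => F y ^ (1/p)) y ∂μ :=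
            lintegral_congr e1
        _ ≤ (∫⁻ y, (h y * F y ^ (1/q)) ^ q ∂μ) ^ (1/q) * (∫⁻ y, (F y ^ (1/p)) ^ p ∂μ) ^ (1/p) :=
            hkey
        _ = (∫⁻ y, h y ^ q * F y ∂μ) ^ (1/q) := by
            simp only [e2, e3, hF1, ENNReal.one_rpow, mul_one]
    calc (∫⁻ y, h y * F y ∂μ) ^ q ≤ ((∫⁻ y, h y ^ q * F y ∂μ) ^ (1/q)) ^ q :=
          ENNReal.rpow_le_rpow hle (by positivity)
      _ = ∫⁻ y, h y ^ q * F y ∂μ := by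
          rw [← ENNReal.rpow_mul, one_div_mul_cancel hq0, ENNReal.rpow_one]

/-- Peetre-type inequality. -/
lemma aux_peetre {lam : ℝ} (hlam : 0 < lam) {E : Type*} [SeminormedAddCommGroup E] (x y : E) :
    ENNReal.ofReal ((1 + ‖x‖ ^ 2) ^ lam) ≤
      ENNReal.ofReal ((2:ℝ) ^ lam) * ENNReal.ofReal ((1 + ‖y‖ ^ 2) ^ lam) *
        ENNReal.ofReal ((1 + ‖x - y‖ ^ 2) ^ lam) := by
  rw [← ENNReal.ofReal_mul (by positivity), ← ENNReal.ofReal_mul (by positivity)]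
  apply ENNReal.ofReal_le_ofReal
  rw [← Real.mul_rpow (by norm_num) (by positivity), ← Real.mul_rpow (by positivity) (by positivity)]
  apply Real.rpow_le_rpow (by positivity) _ hlam.le
  have hx : ‖x‖ ≤ ‖y‖ + ‖x - y‖ := by
    calc ‖x‖ = ‖y + (x - y)‖ := by congr 1; abel
      _ ≤ ‖y‖ + ‖x - y‖ := norm_add_le _ _
  nlinarith [norm_nonneg x, norm_nonneg y, norm_nonneg (x - y), sq_nonneg (‖y‖ - ‖x - y‖),
    sq_nonneg (‖y‖ * ‖x - y‖)]

/-- Weighted convolution bound: for `d ≥ 2` (`k = d-1 ≥ 1`), `λ > 0`,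
`q ≥ 1`, with `w(x) = (1+|x^{2…d}|²)^λ` and `π(y) = (1+|y^{2…d}|²)^λ`, if `f, h ≥ 0`
are measurable, `ℤ`-periodic in the first coordinate, and `∫_{[0,1)×ℝ^{d-1}} f = 1`,
then `∫ (h⋆f)^q w ≤ 2^λ (∫ f w)(∫ h^q π)`, where
`(h⋆f)(x) = ∫_{[0,1)×ℝ^{d-1}} h(y) f(x-y) dy`. -/
theorem stmt7 (k : ℕ) (hk : 1 ≤ k) (lam : ℝ) (hlam : 0 < lam) (q : ℝ) (hq : 1 ≤ q)
    (f h : ℝ × EuclideanSpace ℝ (Fin k) → ENNReal)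
    (hf : Measurable f) (hh : Measurable h)
    (hfper : ∀ a y, f (a + 1, y) = f (a, y))
    (hhper : ∀ a y, h (a + 1, y) = h (a, y))
    (hf1 : ∫⁻ x, f x ∂(cylMeasure k) = 1) :
    ∫⁻ x, (∫⁻ y, h y * f (x.1 - y.1, x.2 - y.2) ∂(cylMeasure k)) ^ q *
        ENNReal.ofReal ((1 + ‖x.2‖ ^ 2) ^ lam) ∂(cylMeasure k) ≤
      ENNReal.ofReal ((2 : ℝ) ^ lam) *
        (∫⁻ x, f x * ENNReal.ofReal ((1 + ‖x.2‖ ^ 2) ^ lam) ∂(cylMeasure k)) *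
        (∫⁻ y, h y ^ q * ENNReal.ofReal ((1 + ‖y.2‖ ^ 2) ^ lam) ∂(cylMeasure k)) := by
  set μ := cylMeasure k with hμ
  set C : ℝ≥0∞ := ENNReal.ofReal ((2 : ℝ) ^ lam) with hC
  set W : EuclideanSpace ℝ (Fin k) → ℝ≥0∞ :=
    fun v => ENNReal.ofReal ((1 + ‖v‖ ^ 2) ^ lam) with hWdef
  have hmW : Measurable W := by
    apply ENNReal.measurable_ofReal.comp
    exact (measurable_const.add (measurable_norm.pow_const 2)).pow measurable_const
  -- measurability of the translate of f
  have hsub : ∀ x : ℝ × EuclideanSpace ℝ (Fin k),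
      Measurable (fun y : ℝ × EuclideanSpace ℝ (Fin k) => f (x.1 - y.1, x.2 - y.2)) := fun x =>
    hf.comp ((measurable_const.sub measurable_fst).prodMk (measurable_const.sub measurable_snd))
  have hFx1 : ∀ x : ℝ × EuclideanSpace ℝ (Fin k),
      ∫⁻ y, f (x.1 - y.1, x.2 - y.2) ∂μ = 1 := fun x => by
    rw [hμ, aux_trans_left k hf hfper x]; exact hf1
  have step1 : ∀ x : ℝ × EuclideanSpace ℝ (Fin k),
      (∫⁻ y, h y * f (x.1 - y.1, x.2 - y.2) ∂μ) ^ q ≤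
        ∫⁻ y, h y ^ q * f (x.1 - y.1, x.2 - y.2) ∂μ := fun x =>
    aux_jensen μ hq hh.aemeasurable (hsub x).aemeasurable (hFx1 x)
  have hI : ∀ c : ℝ × EuclideanSpace ℝ (Fin k),
      ∫⁻ x, f (x.1 - c.1, x.2 - c.2) * W (x.2 - c.2) ∂μ = ∫⁻ z, f z * W z.2 ∂μ := fun c => by
    rw [hμ]
    exact aux_trans_right k (hf.mul (hmW.comp measurable_snd))
      (fun a y => by simp [hfper]) c
  calc ∫⁻ x, (∫⁻ y, h y * f (x.1 - y.1, x.2 - y.2) ∂μ) ^ q * W x.2 ∂μ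
      ≤ ∫⁻ x, (∫⁻ y, h y ^ q * f (x.1 - y.1, x.2 - y.2) ∂μ) * W x.2 ∂μ :=
        lintegral_mono fun x => mul_le_mul_left (step1 x) _
    _ = ∫⁻ x, ∫⁻ y, h y ^ q * f (x.1 - y.1, x.2 - y.2) * W x.2 ∂μ ∂μ :=
        lintegral_congr fun x =>
          (lintegral_mul_const _ ((hh.pow_const q).mul (hsub x))).symm
    _ ≤ ∫⁻ x, ∫⁻ y, h y ^ q * f (x.1 - y.1, x.2 - y.2) *
          (C * W y.2 * W (x.2 - y.2)) ∂μ ∂μ := by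
        refine lintegral_mono fun x => lintegral_mono fun y => mul_le_mul_right ?_ _
        exact aux_peetre hlam x.2 y.2
    _ = ∫⁻ y, ∫⁻ x, h y ^ q * f (x.1 - y.1, x.2 - y.2) *
          (C * W y.2 * W (x.2 - y.2)) ∂μ ∂μ := by
        apply lintegral_lintegral_swap
        apply Measurable.aemeasurable
        have hm1 : Measurable (fun z : (ℝ × EuclideanSpace ℝ (Fin k)) ×
            (ℝ × EuclideanSpace ℝ (Fin k)) => f (z.1.1 - z.2.1, z.1.2 - z.2.2)) :=
          hf.comp ((measurable_fst.fst.sub measurable_snd.fst).prodMk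
            (measurable_fst.snd.sub measurable_snd.snd))
        exact (((hh.comp measurable_snd).pow_const q).mul hm1).mul
          ((measurable_const.mul ((hmW.comp measurable_snd).comp measurable_snd)).mul
            (hmW.comp (measurable_fst.snd.sub measurable_snd.snd)))
    _ = ∫⁻ y, (h y ^ q * W y.2 * C) * ∫⁻ x, f (x.1 - y.1, x.2 - y.2) * W (x.2 - y.2) ∂μ ∂μ := by
        refine lintegral_congr fun y => ?_
        have hsub2 : Measurable (fun x : ℝ × EuclideanSpace ℝ (Fin k) =>
            f (x.1 - y.1, x.2 - y.2) * W (x.2 - y.2)) :=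
          (hf.comp ((measurable_fst.sub measurable_const).prodMk
            (measurable_snd.sub measurable_const))).mul
            (hmW.comp (measurable_snd.sub measurable_const))
        rw [← lintegral_const_mul _ hsub2]
        exact lintegral_congr fun x => by ring
    _ = ∫⁻ y, (C * ∫⁻ z, f z * W z.2 ∂μ) * (h y ^ q * W y.2) ∂μ :=
        lintegral_congr fun y => by rw [hI y]; ring
    _ = C * (∫⁻ z, f z * W z.2 ∂μ) * ∫⁻ y, h y ^ q * W y.2 ∂μ := by
        exact lintegral_const_mul (μ := μ) (f := fun y => h y ^ q * W y.2) _
          ((hh.pow_const q).mul (hmW.comp measurable_snd))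
end

section
/- Let d ≥ 1, α > 0, A ≥ 0, B ≥ 0, M ≥ 0, L ≥ 0. Let ψ : ℝ → ℝ be a C¹, ℤ-periodic, nonnegative function with sup|ψ| ≤ A and sup|ψ'| ≤ B, and set φ = α + ψ. Let h : ℝ^d → ℝ be measurable with sup|h| ≤ M and Lipschitz with constant L. For a probability measure ν on ℝ^d define F_ν(x) = (∫ φ(x − z¹) h(z) dν(z)) / (∫ φ(x − z¹) dν(z)) for x ∈ ℝ. Then there exists a constant K, depending only on α, A, B, M and L, such that for all probability measures ν₁, ν₂ on ℝ^d, every coupling π of ν₁ and ν₂ (probability measure on ℝ^d×ℝ^d with marginals ν₁ and ν₂), and all x, y ∈ ℝ: |F_{ν₁}(x) − F_{ν₂}(y)| ≤ K ( min(1, |x−y|) + ∫ min(1, |a−b|) dπ(a,b) ). -/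
open MeasureTheory ProbabilityTheory

lemma min_one_add (s t : ℝ) (hs : 0 ≤ s) (ht : 0 ≤ t) :
    min 1 (s + t) ≤ min 1 s + min 1 t := by
  rcases le_total 1 s with h | h
  · have h1 : min 1 s = 1 := min_eq_left h
    calc min 1 (s+t) ≤ 1 := min_le_left _ _
    _ ≤ min 1 s + min 1 t := by
      rw [h1]; have : 0 ≤ min 1 t := le_min one_pos.le ht; linarith
  · rcases le_total 1 t with h' | h'
    · calc min 1 (s+t) ≤ 1 := min_le_left _ _
      _ ≤ min 1 s + min 1 t := by
        rw [min_eq_left h']; have : 0 ≤ min 1 s := le_min one_pos.le hs; linarith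
    · rcases le_total 1 (s + t) with h'' | h''
      · calc min 1 (s+t) ≤ 1 := min_le_left _ _
        _ ≤ min 1 s + min 1 t := by rw [min_eq_right h, min_eq_right h']; linarith
      · rw [min_eq_right h, min_eq_right h', min_eq_right h'']

lemma ratio_bound (α M N₁ D₁ N₂ D₂ : ℝ) (hα : 0 < α) (hM : 0 ≤ M)
    (h1 : α ≤ D₁) (h2 : α ≤ D₂) (hN2 : |N₂| ≤ M * D₂) :
    |N₁ / D₁ - N₂ / D₂| ≤ |N₁ - N₂| / α + M * |D₁ - D₂| / α := by
  have hD1 : 0 < D₁ := hα.trans_le h1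
  have hD2 : 0 < D₂ := hα.trans_le h2
  have key : N₁ / D₁ - N₂ / D₂ = (N₁ - N₂) / D₁ + (N₂ / D₂) * ((D₂ - D₁) / D₁) := by
    field_simp; ring
  have hq : |N₂ / D₂| ≤ M := by
    rw [abs_div, abs_of_pos hD2, div_le_iff₀ hD2]; exact hN2
  calc |N₁ / D₁ - N₂ / D₂| ≤ |(N₁ - N₂) / D₁| + |(N₂ / D₂) * ((D₂ - D₁) / D₁)| := by
        rw [key]; exact abs_add_le _ _
    _ = |N₁ - N₂| / D₁ + |N₂ / D₂| * (|D₂ - D₁| / D₁) := by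
        rw [abs_mul, abs_div (N₁ - N₂), abs_div (D₂ - D₁), abs_of_pos hD1]
    _ ≤ |N₁ - N₂| / α + M * (|D₁ - D₂| / α) := by
        have e : |D₂ - D₁| = |D₁ - D₂| := abs_sub_comm _ _
        have g1 : |N₁ - N₂| / D₁ ≤ |N₁ - N₂| / α :=
          div_le_div_of_nonneg_left (abs_nonneg _) hα h1
        have g2 : |D₂ - D₁| / D₁ ≤ |D₁ - D₂| / α := by
          rw [e]; exact div_le_div_of_nonneg_left (abs_nonneg _) hα h1
        have g3 : |N₂ / D₂| * (|D₂ - D₁| / D₁) ≤ M * (|D₁ - D₂| / α) :=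
          mul_le_mul hq g2 (by positivity) hM
        linarith
    _ = |N₁ - N₂| / α + M * |D₁ - D₂| / α := by ring

lemma coord_le_norm {d : ℕ} (v : EuclideanSpace ℝ (Fin d)) (i : Fin d) :
    |v i| ≤ ‖v‖ := by
  rw [EuclideanSpace.norm_eq, ← Real.sqrt_sq_eq_abs (v i)]
  apply Real.sqrt_le_sqrt
  have := Finset.single_le_sum (f := fun j => ‖v j‖ ^ 2)
    (fun j _ => by positivity) (Finset.mem_univ i)
  simpa [Real.norm_eq_abs, sq_abs] using this

/-- Lipschitz stability of the regularized Nadaraya–Watson drift: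
with `φ = α + ψ` (`α > 0`, `ψ ≥ 0` of class `C¹`, `ℤ`-periodic, `sup|ψ| ≤ A`,
`sup|ψ'| ≤ B`) and `h` bounded by `M` and `L`-Lipschitz, setting
`F_ν(x) = (∫ φ(x - z¹) h(z) dν(z)) / (∫ φ(x - z¹) dν(z))`, there is a constant `K`
depending only on `α, A, B, M, L` such that for all probability measures `ν₁, ν₂`
on `ℝ^d`, every coupling `π` of `ν₁` and `ν₂`, and all `x, y ∈ ℝ`,
`|F_{ν₁}(x) - F_{ν₂}(y)| ≤ K (min(1,|x-y|) + ∫ min(1,|a-b|) dπ(a,b))`. -/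
theorem stmt12 (α : ℝ) (hα : 0 < α) (A B M L : ℝ)
    (hA : 0 ≤ A) (hB : 0 ≤ B) (hM : 0 ≤ M) (hL : 0 ≤ L) :
    ∃ K : ℝ, 0 < K ∧
      ∀ (d : ℕ) (hd : 0 < d) (ψ : ℝ → ℝ), ContDiff ℝ 1 ψ → (∀ x, 0 ≤ ψ x) →
        (∀ x, ψ (x + 1) = ψ x) → (∀ x, |ψ x| ≤ A) → (∀ x, |deriv ψ x| ≤ B) →
      ∀ h : EuclideanSpace ℝ (Fin d) → ℝ, Measurable h → (∀ z, |h z| ≤ M) →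
        LipschitzWith (Real.toNNReal L) h →
      ∀ (ν₁ ν₂ : Measure (EuclideanSpace ℝ (Fin d))),
        IsProbabilityMeasure ν₁ → IsProbabilityMeasure ν₂ →
      ∀ (π : Measure (EuclideanSpace ℝ (Fin d) × EuclideanSpace ℝ (Fin d))),
        IsProbabilityMeasure π → π.map Prod.fst = ν₁ → π.map Prod.snd = ν₂ →
      ∀ x y : ℝ,
        |(∫ z, (α + ψ (x - z ⟨0, hd⟩)) * h z ∂ν₁) /
            (∫ z, (α + ψ (x - z ⟨0, hd⟩)) ∂ν₁) -
          (∫ z, (α + ψ (y - z ⟨0, hd⟩)) * h z ∂ν₂) /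
            (∫ z, (α + ψ (y - z ⟨0, hd⟩)) ∂ν₂)| ≤
        K * (min 1 |x - y| + ∫ p, min 1 ‖p.1 - p.2‖ ∂π) := by
  have hCφ : (0:ℝ) ≤ max A B := le_trans hA (le_max_left _ _)
  have hCh : (0:ℝ) ≤ max L (2*M) := le_trans hL (le_max_left _ _)
  set Cφ := max A B with hCφdef
  set Ch := max L (2*M) with hChdef
  set S := M * Cφ + (α + A) * Ch + M * Cφ with hSdef
  have hS : 0 ≤ S := by
    have := mul_nonneg hM hCφ
    have := mul_nonneg (by linarith : (0:ℝ) ≤ α + A) hCh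
    linarith
  refine ⟨S / α + 1, by positivity, ?_⟩
  intro d hd ψ hψC hψnn hψper hψA hψB h hmeas hhM hhL ν₁ ν₂ hν₁ hν₂ π hπ hπ1 hπ2 x y
  haveI := hν₁; haveI := hν₂; haveI := hπ
  set K := S / α + 1 with hKdef
  -- coordinate map
  have hc : Measurable (fun z : EuclideanSpace ℝ (Fin d) => z ⟨0, hd⟩) :=
    (EuclideanSpace.proj (⟨0, hd⟩ : Fin d)).continuous.measurable
  have hcoord : ∀ a b : EuclideanSpace ℝ (Fin d), |a ⟨0, hd⟩ - b ⟨0, hd⟩| ≤ ‖a - b‖ := by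
    intro a b
    have := coord_le_norm (a - b) ⟨0, hd⟩
    simpa using this
  -- ψ bounds
  have hψub : ∀ u, ψ u ≤ A := fun u => (abs_le.mp (hψA u)).2
  have hlip : LipschitzWith B.toNNReal ψ := by
    apply lipschitzWith_of_nnnorm_deriv_le (hψC.differentiable one_ne_zero)
    intro t
    rw [← NNReal.coe_le_coe, coe_nnnorm, Real.norm_eq_abs, Real.coe_toNNReal _ hB]
    exact hψB t
  have hψlip : ∀ u v, |ψ u - ψ v| ≤ B * |u - v| := by
    intro u v
    have := hlip.dist_le_mul u v
    rwa [Real.dist_eq, Real.dist_eq, Real.coe_toNNReal _ hB] at this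
  have hφd : ∀ u v, |ψ u - ψ v| ≤ Cφ * min 1 |u - v| := by
    intro u v
    rcases le_total |u - v| 1 with hle | hle
    · rw [min_eq_right hle]
      exact le_trans (hψlip u v) (mul_le_mul_of_nonneg_right (le_max_right A B) (abs_nonneg _))
    · rw [min_eq_left hle, mul_one]
      refine le_trans ?_ (le_max_left A B)
      exact abs_le.mpr ⟨by linarith [hψnn u, hψub v], by linarith [hψnn v, hψub u]⟩
  have hhd : ∀ a b : EuclideanSpace ℝ (Fin d), |h a - h b| ≤ Ch * min 1 ‖a - b‖ := by
    intro a b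
    rcases le_total ‖a - b‖ 1 with hle | hle
    · rw [min_eq_right hle]
      have := hhL.dist_le_mul a b
      rw [Real.dist_eq, dist_eq_norm, Real.coe_toNNReal _ hL] at this
      exact le_trans this (mul_le_mul_of_nonneg_right (le_max_left _ _) (norm_nonneg _))
    · rw [min_eq_left hle, mul_one]
      refine le_trans (abs_sub _ _) ?_
      refine le_trans (add_le_add (hhM a) (hhM b)) ?_
      have : L ≤ max L (2*M) := le_max_left _ _
      linarith [le_max_right L (2*M)]
  -- φ bounds
  have hφlb : ∀ u, α ≤ α + ψ u := fun u => by linarith [hψnn u]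
  have hφub : ∀ u, α + ψ u ≤ α + A := fun u => by linarith [hψub u]
  have hφabs : ∀ u, |α + ψ u| ≤ α + A := fun u =>
    abs_le.mpr ⟨by linarith [hψnn u], hφub u⟩
  -- measurability
  have hmφ : ∀ t : ℝ, Measurable (fun z : EuclideanSpace ℝ (Fin d) => α + ψ (t - z ⟨0, hd⟩)) := fun t =>
    measurable_const.add (hψC.continuous.measurable.comp (measurable_const.sub hc))
  have hmN : ∀ t : ℝ, Measurable (fun z : EuclideanSpace ℝ (Fin d) => (α + ψ (t - z ⟨0, hd⟩)) * h z) := fun t =>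
    (hmφ t).mul hmeas
  -- integrability on ν's
  have intD : ∀ (t : ℝ) (ν : Measure (EuclideanSpace ℝ (Fin d))), IsProbabilityMeasure ν →
      Integrable (fun z : EuclideanSpace ℝ (Fin d) => α + ψ (t - z ⟨0, hd⟩)) ν := by
    intro t ν hν; haveI := hν
    refine (integrable_const (α + A)).mono' (hmφ t).aestronglyMeasurable ?_
    exact ae_of_all _ fun z => by simpa [Real.norm_eq_abs] using hφabs (t - z ⟨0, hd⟩)
  have intN : ∀ (t : ℝ) (ν : Measure (EuclideanSpace ℝ (Fin d))), IsProbabilityMeasure ν →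
      Integrable (fun z : EuclideanSpace ℝ (Fin d) => (α + ψ (t - z ⟨0, hd⟩)) * h z) ν := by
    intro t ν hν; haveI := hν
    refine (integrable_const ((α + A) * M)).mono' (hmN t).aestronglyMeasurable ?_
    refine ae_of_all _ fun z => ?_
    rw [Real.norm_eq_abs, abs_mul]
    exact mul_le_mul (hφabs _) (hhM z) (abs_nonneg _) (by linarith)
  -- lower bounds for denominators
  have hDlb : ∀ (t : ℝ) (ν : Measure (EuclideanSpace ℝ (Fin d))) (hν : IsProbabilityMeasure ν),
      α ≤ ∫ z, (α + ψ (t - z ⟨0, hd⟩)) ∂ν := by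
    intro t ν hν; haveI := hν
    have := integral_mono (integrable_const α) (intD t ν hν) (fun z => hφlb _)
    simpa using this
  -- numerator bounds
  have hNb : ∀ (t : ℝ) (ν : Measure (EuclideanSpace ℝ (Fin d))) (hν : IsProbabilityMeasure ν),
      |∫ z, (α + ψ (t - z ⟨0, hd⟩)) * h z ∂ν| ≤ M * ∫ z, (α + ψ (t - z ⟨0, hd⟩)) ∂ν := by
    intro t ν hν; haveI := hν
    calc |∫ z, (α + ψ (t - z ⟨0, hd⟩)) * h z ∂ν|
        ≤ ∫ z, |(α + ψ (t - z ⟨0, hd⟩)) * h z| ∂ν := by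
          have := norm_integral_le_integral_norm
            (fun z : EuclideanSpace ℝ (Fin d) => (α + ψ (t - z ⟨0, hd⟩)) * h z) (μ := ν)
          simpa only [Real.norm_eq_abs] using this
      _ ≤ ∫ z, M * (α + ψ (t - z ⟨0, hd⟩)) ∂ν := by
          refine integral_mono (intN t ν hν).abs ((intD t ν hν).const_mul M) fun z => ?_
          rw [abs_mul, abs_of_pos (lt_of_lt_of_le hα (hφlb _)), mul_comm M]
          exact mul_le_mul_of_nonneg_left (hhM z) (by linarith [hψnn (t - z ⟨0, hd⟩)])
      _ = M * ∫ z, (α + ψ (t - z ⟨0, hd⟩)) ∂ν := integral_const_mul _ _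
  -- transport to π
  have hmapD1 : (∫ z, (α + ψ (x - z ⟨0, hd⟩)) ∂ν₁)
      = ∫ p : EuclideanSpace ℝ (Fin d) × EuclideanSpace ℝ (Fin d), (α + ψ (x - p.1 ⟨0, hd⟩)) ∂π := by
    rw [← hπ1, integral_map measurable_fst.aemeasurable (hmφ x).aestronglyMeasurable]
  have hmapD2 : (∫ z, (α + ψ (y - z ⟨0, hd⟩)) ∂ν₂)
      = ∫ p : EuclideanSpace ℝ (Fin d) × EuclideanSpace ℝ (Fin d), (α + ψ (y - p.2 ⟨0, hd⟩)) ∂π := by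
    rw [← hπ2, integral_map measurable_snd.aemeasurable (hmφ y).aestronglyMeasurable]
  have hmapN1 : (∫ z, (α + ψ (x - z ⟨0, hd⟩)) * h z ∂ν₁)
      = ∫ p : EuclideanSpace ℝ (Fin d) × EuclideanSpace ℝ (Fin d), (α + ψ (x - p.1 ⟨0, hd⟩)) * h p.1 ∂π := by
    rw [← hπ1, integral_map measurable_fst.aemeasurable (hmN x).aestronglyMeasurable]
  have hmapN2 : (∫ z, (α + ψ (y - z ⟨0, hd⟩)) * h z ∂ν₂)
      = ∫ p : EuclideanSpace ℝ (Fin d) × EuclideanSpace ℝ (Fin d), (α + ψ (y - p.2 ⟨0, hd⟩)) * h p.2 ∂π := by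
    rw [← hπ2, integral_map measurable_snd.aemeasurable (hmN y).aestronglyMeasurable]
  -- integrabilities on π
  have intD1π : Integrable (fun p : EuclideanSpace ℝ (Fin d) × EuclideanSpace ℝ (Fin d) => α + ψ (x - p.1 ⟨0, hd⟩)) π := by
    refine (integrable_const (α + A)).mono'
      ((hmφ x).comp measurable_fst).aestronglyMeasurable ?_
    exact ae_of_all _ fun p => by simpa [Real.norm_eq_abs] using hφabs (x - p.1 ⟨0, hd⟩)
  have intD2π : Integrable (fun p : EuclideanSpace ℝ (Fin d) × EuclideanSpace ℝ (Fin d) => α + ψ (y - p.2 ⟨0, hd⟩)) π := by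
    refine (integrable_const (α + A)).mono'
      ((hmφ y).comp measurable_snd).aestronglyMeasurable ?_
    exact ae_of_all _ fun p => by simpa [Real.norm_eq_abs] using hφabs (y - p.2 ⟨0, hd⟩)
  have intN1π : Integrable (fun p : EuclideanSpace ℝ (Fin d) × EuclideanSpace ℝ (Fin d) => (α + ψ (x - p.1 ⟨0, hd⟩)) * h p.1) π := by
    refine (integrable_const ((α + A) * M)).mono'
      ((hmN x).comp measurable_fst).aestronglyMeasurable ?_
    refine ae_of_all _ fun p => ?_
    rw [Real.norm_eq_abs, abs_mul]
    exact mul_le_mul (hφabs _) (hhM _) (abs_nonneg _) (by linarith)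
  have intN2π : Integrable (fun p : EuclideanSpace ℝ (Fin d) × EuclideanSpace ℝ (Fin d) => (α + ψ (y - p.2 ⟨0, hd⟩)) * h p.2) π := by
    refine (integrable_const ((α + A) * M)).mono'
      ((hmN y).comp measurable_snd).aestronglyMeasurable ?_
    refine ae_of_all _ fun p => ?_
    rw [Real.norm_eq_abs, abs_mul]
    exact mul_le_mul (hφabs _) (hhM _) (abs_nonneg _) (by linarith)
  have intW : Integrable (fun p : EuclideanSpace ℝ (Fin d) × EuclideanSpace ℝ (Fin d) => min 1 ‖p.1 - p.2‖) π := by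
    refine (integrable_const (1:ℝ)).mono'
      (continuous_const.min ((continuous_fst.sub continuous_snd).norm)).aestronglyMeasurable ?_
    refine ae_of_all _ fun p => ?_
    rw [Real.norm_eq_abs, abs_of_nonneg (le_min one_pos.le (norm_nonneg _))]
    exact min_le_left _ _
  set m := min 1 |x - y| with hmdef
  set W := ∫ p : EuclideanSpace ℝ (Fin d) × EuclideanSpace ℝ (Fin d), min 1 ‖p.1 - p.2‖ ∂π with hWdef
  have hm0 : 0 ≤ m := le_min one_pos.le (abs_nonneg _)
  have hW0 : 0 ≤ W := integral_nonneg fun p => le_min one_pos.le (norm_nonneg _)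
  -- pointwise key min estimate
  have keymin : ∀ a b : EuclideanSpace ℝ (Fin d),
      min 1 |(x - a ⟨0, hd⟩) - (y - b ⟨0, hd⟩)| ≤ m + min 1 ‖a - b‖ := by
    intro a b
    have h1 : |(x - a ⟨0, hd⟩) - (y - b ⟨0, hd⟩)| ≤ |x - y| + |a ⟨0, hd⟩ - b ⟨0, hd⟩| := by
      have : (x - a ⟨0, hd⟩) - (y - b ⟨0, hd⟩) = (x - y) - (a ⟨0, hd⟩ - b ⟨0, hd⟩) := by ring
      rw [this]; exact abs_sub _ _
    calc min 1 |(x - a ⟨0, hd⟩) - (y - b ⟨0, hd⟩)|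
        ≤ min 1 (|x - y| + |a ⟨0, hd⟩ - b ⟨0, hd⟩|) :=
          min_le_min le_rfl h1
      _ ≤ min 1 |x - y| + min 1 |a ⟨0, hd⟩ - b ⟨0, hd⟩| :=
          min_one_add _ _ (abs_nonneg _) (abs_nonneg _)
      _ ≤ m + min 1 ‖a - b‖ := by
          exact add_le_add le_rfl (min_le_min le_rfl (hcoord a b))
  -- D difference
  have hDdiff : |(∫ z, (α + ψ (x - z ⟨0, hd⟩)) ∂ν₁) - ∫ z, (α + ψ (y - z ⟨0, hd⟩)) ∂ν₂|
      ≤ Cφ * (m + W) := by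
    rw [hmapD1, hmapD2, ← integral_sub intD1π intD2π]
    calc |∫ p : EuclideanSpace ℝ (Fin d) × EuclideanSpace ℝ (Fin d), ((α + ψ (x - p.1 ⟨0, hd⟩)) - (α + ψ (y - p.2 ⟨0, hd⟩))) ∂π|
        ≤ ∫ p : EuclideanSpace ℝ (Fin d) × EuclideanSpace ℝ (Fin d), |(α + ψ (x - p.1 ⟨0, hd⟩)) - (α + ψ (y - p.2 ⟨0, hd⟩))| ∂π := by
          simpa [Real.norm_eq_abs] using norm_integral_le_integral_norm
            (fun p : EuclideanSpace ℝ (Fin d) × EuclideanSpace ℝ (Fin d) => (α + ψ (x - p.1 ⟨0, hd⟩)) - (α + ψ (y - p.2 ⟨0, hd⟩))) (μ := π)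
      _ ≤ ∫ p : EuclideanSpace ℝ (Fin d) × EuclideanSpace ℝ (Fin d), (Cφ * m + Cφ * min 1 ‖p.1 - p.2‖) ∂π := by
          refine integral_mono (intD1π.sub intD2π).abs
            ((integrable_const _).add (intW.const_mul _)) fun p => ?_
          have h1 : |(α + ψ (x - p.1 ⟨0, hd⟩)) - (α + ψ (y - p.2 ⟨0, hd⟩))|
              = |ψ (x - p.1 ⟨0, hd⟩) - ψ (y - p.2 ⟨0, hd⟩)| := by ring_nf
          rw [h1]
          calc |ψ (x - p.1 ⟨0, hd⟩) - ψ (y - p.2 ⟨0, hd⟩)|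
              ≤ Cφ * min 1 |(x - p.1 ⟨0, hd⟩) - (y - p.2 ⟨0, hd⟩)| := hφd _ _
            _ ≤ Cφ * (m + min 1 ‖p.1 - p.2‖) :=
                mul_le_mul_of_nonneg_left (keymin _ _) hCφ
            _ = Cφ * m + Cφ * min 1 ‖p.1 - p.2‖ := by ring
      _ = Cφ * (m + W) := by
          rw [integral_add (integrable_const _) (intW.const_mul _), integral_const,
            integral_const_mul]
          simp only [probReal_univ, measure_univ, ENNReal.toReal_one, one_smul]
          rw [hWdef]; ring
  -- N difference
  have hNdiff : |(∫ z, (α + ψ (x - z ⟨0, hd⟩)) * h z ∂ν₁)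
      - ∫ z, (α + ψ (y - z ⟨0, hd⟩)) * h z ∂ν₂|
      ≤ M * Cφ * m + M * Cφ * W + (α + A) * Ch * W := by
    rw [hmapN1, hmapN2, ← integral_sub intN1π intN2π]
    calc |∫ p : EuclideanSpace ℝ (Fin d) × EuclideanSpace ℝ (Fin d), ((α + ψ (x - p.1 ⟨0, hd⟩)) * h p.1
            - (α + ψ (y - p.2 ⟨0, hd⟩)) * h p.2) ∂π|
        ≤ ∫ p : EuclideanSpace ℝ (Fin d) × EuclideanSpace ℝ (Fin d), |(α + ψ (x - p.1 ⟨0, hd⟩)) * h p.1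
            - (α + ψ (y - p.2 ⟨0, hd⟩)) * h p.2| ∂π := by
          simpa [Real.norm_eq_abs] using norm_integral_le_integral_norm
            (fun p : EuclideanSpace ℝ (Fin d) × EuclideanSpace ℝ (Fin d) => (α + ψ (x - p.1 ⟨0, hd⟩)) * h p.1
              - (α + ψ (y - p.2 ⟨0, hd⟩)) * h p.2) (μ := π)
      _ ≤ ∫ p : EuclideanSpace ℝ (Fin d) × EuclideanSpace ℝ (Fin d), (M * Cφ * m + (M * Cφ + (α + A) * Ch) * min 1 ‖p.1 - p.2‖) ∂π := by
          refine integral_mono (intN1π.sub intN2π).abs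
            ((integrable_const _).add (intW.const_mul _)) fun p => ?_
          set u := x - p.1 ⟨0, hd⟩
          set v := y - p.2 ⟨0, hd⟩
          have split : (α + ψ u) * h p.1 - (α + ψ v) * h p.2
              = (ψ u - ψ v) * h p.1 + (α + ψ v) * (h p.1 - h p.2) := by ring
          have b1 : |(ψ u - ψ v) * h p.1| ≤ (Cφ * (m + min 1 ‖p.1 - p.2‖)) * M := by
            rw [abs_mul]
            refine mul_le_mul ?_ (hhM _) (abs_nonneg _) (by positivity)
            exact le_trans (hφd u v) (mul_le_mul_of_nonneg_left (keymin _ _) hCφ)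
          have b2 : |(α + ψ v) * (h p.1 - h p.2)| ≤ (α + A) * (Ch * min 1 ‖p.1 - p.2‖) := by
            rw [abs_mul]
            exact mul_le_mul (hφabs v) (hhd _ _) (abs_nonneg _) (by linarith)
          calc |(α + ψ u) * h p.1 - (α + ψ v) * h p.2|
              ≤ |(ψ u - ψ v) * h p.1| + |(α + ψ v) * (h p.1 - h p.2)| := by
                rw [split]; exact abs_add_le _ _
            _ ≤ (Cφ * (m + min 1 ‖p.1 - p.2‖)) * M + (α + A) * (Ch * min 1 ‖p.1 - p.2‖) :=
                add_le_add b1 b2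
            _ = M * Cφ * m + (M * Cφ + (α + A) * Ch) * min 1 ‖p.1 - p.2‖ := by ring
      _ = M * Cφ * m + M * Cφ * W + (α + A) * Ch * W := by
          rw [integral_add (integrable_const _) (intW.const_mul _), integral_const,
            integral_const_mul]
          simp only [probReal_univ, measure_univ, ENNReal.toReal_one, one_smul]
          rw [hWdef]; ring
  -- conclude
  have hrb := ratio_bound α M
    (∫ z, (α + ψ (x - z ⟨0, hd⟩)) * h z ∂ν₁) (∫ z, (α + ψ (x - z ⟨0, hd⟩)) ∂ν₁)
    (∫ z, (α + ψ (y - z ⟨0, hd⟩)) * h z ∂ν₂) (∫ z, (α + ψ (y - z ⟨0, hd⟩)) ∂ν₂)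
    hα hM (hDlb x ν₁ hν₁) (hDlb y ν₂ hν₂) (hNb y ν₂ hν₂)
  refine le_trans hrb ?_
  set ΔN := |(∫ z, (α + ψ (x - z ⟨0, hd⟩)) * h z ∂ν₁)
      - ∫ z, (α + ψ (y - z ⟨0, hd⟩)) * h z ∂ν₂|
  set ΔD := |(∫ z, (α + ψ (x - z ⟨0, hd⟩)) ∂ν₁) - ∫ z, (α + ψ (y - z ⟨0, hd⟩)) ∂ν₂|
  have hΔN0 : 0 ≤ ΔN := abs_nonneg _
  have hΔD0 : 0 ≤ ΔD := abs_nonneg _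
  have hKα : K * α = S + α := by
    rw [hKdef]; field_simp
  have step : ΔN + M * ΔD ≤ K * (m + W) * α := by
    have hMD : M * ΔD ≤ M * (Cφ * (m + W)) := mul_le_mul_of_nonneg_left hDdiff hM
    have key : ΔN + M * ΔD ≤ (S + α) * (m + W) := by
      have e1 : (0:ℝ) ≤ (α + A) * Ch * m :=
        mul_nonneg (mul_nonneg (by linarith) hCh) hm0
      have e2 : (0:ℝ) ≤ α * (m + W) := mul_nonneg hα.le (by linarith)
      nlinarith [hNdiff, hMD]
    calc ΔN + M * ΔD ≤ (S + α) * (m + W) := key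
      _ = K * (m + W) * α := by rw [← hKα]; ring
  have : ΔN / α + M * ΔD / α = (ΔN + M * ΔD) / α := by ring
  rw [this, div_le_iff₀ hα]
  exact step
end

section
/- Let d ≥ 1, N ≥ 1, α > 0, A ≥ 0, B ≥ 0, M ≥ 0 and L ≥ 0. Let ψ : ℝ → ℝ be a C¹, ℤ-periodic, nonnegative function with sup|ψ| ≤ A and sup|ψ'| ≤ B, set φ = α + ψ, and let h : ℝ^d → ℝ satisfy sup|h| ≤ M and be Lipschitz with constant L. For y ∈ ℝ and x⃗ = (x_1,…,x_N) ∈ (ℝ^d)^N define F(y, x⃗) = (Σ_{m=1}^N φ(y − x_m¹) h(x_m)) / (Σ_{m=1}^N φ(y − x_m¹)). Then there exists a constant K, depending only on α, A, B, M and L (and not on N), such that for all y, ȳ ∈ ℝ and x⃗, x̄⃗ ∈ (ℝ^d)^N: |F(y, x⃗) − F(ȳ, x̄⃗)| ≤ K ( |y − ȳ| + (1/N) Σ_{m=1}^N |x_m − x̄_m| ). -/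
open MeasureTheory


open Finset

lemma coord_le (d : ℕ) (v : EuclideanSpace ℝ (Fin d)) (i : Fin d) : |v i| ≤ ‖v‖ := by
  rw [EuclideanSpace.norm_eq]
  have : |v i| = Real.sqrt (‖v i‖ ^ 2) := by
    rw [Real.sqrt_sq_eq_abs]; simp [abs_abs]
  rw [this]
  apply Real.sqrt_le_sqrt
  exact Finset.single_le_sum (f := fun j => ‖v j‖ ^ 2) (fun j _ => sq_nonneg _) (Finset.mem_univ i)

lemma frac_lip (S S' T T' M c : ℝ) (hc : 0 < c) (hT : c ≤ T) (hT' : c ≤ T')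
    (hM : 0 ≤ M) (hS' : |S'| ≤ M * T') :
    |S / T - S' / T'| ≤ (|S - S'| + M * |T - T'|) / c := by
  have hT0 : (0:ℝ) < T := lt_of_lt_of_le hc hT
  have hT'0 : (0:ℝ) < T' := lt_of_lt_of_le hc hT'
  have key : S / T - S' / T' = (S - S') / T + (S' / T') * ((T' - T) / T) := by
    field_simp; ring
  rw [key]
  have h1 : |(S - S') / T| ≤ |S - S'| / c := by
    rw [abs_div, abs_of_pos hT0]
    exact div_le_div_of_nonneg_left (abs_nonneg _) hc hT |>.trans_eq rfl
  have h2 : |(S' / T') * ((T' - T) / T)| ≤ M * |T - T'| / c := by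
    rw [abs_mul, abs_div, abs_div, abs_of_pos hT0, abs_of_pos hT'0]
    have hq : |S'| / T' ≤ M := (div_le_iff₀ hT'0).2 hS'
    have : |T' - T| = |T - T'| := abs_sub_comm _ _
    rw [this]
    calc |S'| / T' * (|T - T'| / T) ≤ M * (|T - T'| / c) := by
          apply mul_le_mul hq _ (by positivity) hM
          exact div_le_div_of_nonneg_left (abs_nonneg _) hc hT
      _ = M * |T - T'| / c := by ring
  calc |(S - S') / T + (S' / T') * ((T' - T) / T)|
      ≤ |(S - S') / T| + |(S' / T') * ((T' - T) / T)| := abs_add_le _ _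
    _ ≤ |S - S'| / c + M * |T - T'| / c := add_le_add h1 h2
    _ = (|S - S'| + M * |T - T'|) / c := by ring

/-- Lipschitz estimate for the empirical Nadaraya–Watson estimator:
with `φ = α + ψ` (`α > 0`, `ψ ≥ 0` of class `C¹`, `ℤ`-periodic, `sup|ψ| ≤ A`,
`sup|ψ'| ≤ B`) and `h` bounded by `M` and `L`-Lipschitz, setting
`F(y, x⃗) = (∑_{m=1}^N φ(y - x_m¹) h(x_m)) / (∑_{m=1}^N φ(y - x_m¹))`, there is a
constant `K`, depending only on `α, A, B, M, L` (and not on `N` or `d`), such that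
`|F(y, x⃗) - F(ȳ, x̄⃗)| ≤ K (|y - ȳ| + (1/N) ∑_m |x_m - x̄_m|)`. -/
theorem stmt15 (α : ℝ) (hα : 0 < α) (A B M L : ℝ)
    (hA : 0 ≤ A) (hB : 0 ≤ B) (hM : 0 ≤ M) (hL : 0 ≤ L) :
    ∃ K : ℝ, 0 < K ∧
      ∀ (d : ℕ) (hd : 0 < d) (N : ℕ), 1 ≤ N →
      ∀ ψ : ℝ → ℝ, ContDiff ℝ 1 ψ → (∀ x, 0 ≤ ψ x) → (∀ x, ψ (x + 1) = ψ x) →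
        (∀ x, |ψ x| ≤ A) → (∀ x, |deriv ψ x| ≤ B) →
      ∀ h : EuclideanSpace ℝ (Fin d) → ℝ, (∀ z, |h z| ≤ M) →
        LipschitzWith (Real.toNNReal L) h →
      ∀ (y ybar : ℝ) (x xbar : Fin N → EuclideanSpace ℝ (Fin d)),
        |(∑ m : Fin N, (α + ψ (y - x m ⟨0, hd⟩)) * h (x m)) /
            (∑ m : Fin N, (α + ψ (y - x m ⟨0, hd⟩))) -
          (∑ m : Fin N, (α + ψ (ybar - xbar m ⟨0, hd⟩)) * h (xbar m)) /
            (∑ m : Fin N, (α + ψ (ybar - xbar m ⟨0, hd⟩)))| ≤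
        K * (|y - ybar| + (1 / N : ℝ) * ∑ m : Fin N, ‖x m - xbar m‖) := by
  set C : ℝ := 2 * M * B + (α + A) * L with hC
  have hC0 : 0 ≤ C := by positivity
  refine ⟨C / α + 1, by positivity, ?_⟩
  intro d hd N hN ψ hψC hψ0 _ hψA hψB h hhM hhLip y ybar x xbar
  set i : Fin d := ⟨0, hd⟩
  -- ψ is B-Lipschitz
  have hψlip : ∀ a b : ℝ, |ψ a - ψ b| ≤ B * |a - b| := by
    intro a b
    have := convex_univ.norm_image_sub_le_of_norm_deriv_le
      (f := ψ) (fun t _ => (hψC.differentiable one_ne_zero).differentiableAt)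
      (fun t _ => by simpa using hψB t) (Set.mem_univ b) (Set.mem_univ a)
    simpa [Real.norm_eq_abs] using this
  have hhlip : ∀ a b : EuclideanSpace ℝ (Fin d), |h a - h b| ≤ L * ‖a - b‖ := by
    intro a b
    have := hhLip.dist_le_mul a b
    rwa [Real.dist_eq, dist_eq_norm, Real.coe_toNNReal L hL] at this
  set S : ℝ := ∑ m : Fin N, (α + ψ (y - x m i)) * h (x m)
  set S' : ℝ := ∑ m : Fin N, (α + ψ (ybar - xbar m i)) * h (xbar m)
  set T : ℝ := ∑ m : Fin N, (α + ψ (y - x m i))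
  set T' : ℝ := ∑ m : Fin N, (α + ψ (ybar - xbar m i))
  set Dy : ℝ := |y - ybar|
  set Dx : ℝ := ∑ m : Fin N, ‖x m - xbar m‖
  have hDy : 0 ≤ Dy := abs_nonneg _
  have hDx : 0 ≤ Dx := Finset.sum_nonneg fun m _ => norm_nonneg _
  have hNpos : (0:ℝ) < N := by exact_mod_cast hN
  have hc : (0:ℝ) < N * α := by positivity
  have hT : (N:ℝ) * α ≤ T := by
    calc (N:ℝ) * α = ∑ _m : Fin N, α := by simp [mul_comm]
      _ ≤ T := Finset.sum_le_sum fun m _ => le_add_of_nonneg_right (hψ0 _)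
  have hT' : (N:ℝ) * α ≤ T' := by
    calc (N:ℝ) * α = ∑ _m : Fin N, α := by simp [mul_comm]
      _ ≤ T' := Finset.sum_le_sum fun m _ => le_add_of_nonneg_right (hψ0 _)
  have hS' : |S'| ≤ M * T' := by
    calc |S'| ≤ ∑ m : Fin N, |(α + ψ (ybar - xbar m i)) * h (xbar m)| :=
          Finset.abs_sum_le_sum_abs _ _
      _ ≤ ∑ m : Fin N, (α + ψ (ybar - xbar m i)) * M := by
          refine Finset.sum_le_sum fun m _ => ?_
          rw [abs_mul, abs_of_nonneg (by linarith [hψ0 (ybar - xbar m i)])]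
          exact mul_le_mul_of_nonneg_left (hhM _) (by linarith [hψ0 (ybar - xbar m i)])
      _ = M * T' := by rw [Finset.mul_sum]; exact Finset.sum_congr rfl fun m _ => mul_comm _ _
  -- per-term argument difference bound
  have harg : ∀ m : Fin N, |(y - x m i) - (ybar - xbar m i)| ≤ Dy + ‖x m - xbar m‖ := by
    intro m
    have h1 : |x m i - xbar m i| ≤ ‖x m - xbar m‖ := by
      have := coord_le d (x m - xbar m) i
      simpa using this
    calc |(y - x m i) - (ybar - xbar m i)| = |(y - ybar) - (x m i - xbar m i)| := by ring_nf
      _ ≤ |y - ybar| + |x m i - xbar m i| := abs_sub _ _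
      _ ≤ Dy + ‖x m - xbar m‖ := by exact add_le_add le_rfl h1
  have claim2 : |T - T'| ≤ B * (N * Dy + Dx) := by
    have : T - T' = ∑ m : Fin N, (ψ (y - x m i) - ψ (ybar - xbar m i)) := by
      rw [← Finset.sum_sub_distrib]; exact Finset.sum_congr rfl fun m _ => by ring
    rw [this]
    calc |∑ m : Fin N, (ψ (y - x m i) - ψ (ybar - xbar m i))|
        ≤ ∑ m : Fin N, |ψ (y - x m i) - ψ (ybar - xbar m i)| := Finset.abs_sum_le_sum_abs _ _
      _ ≤ ∑ m : Fin N, B * (Dy + ‖x m - xbar m‖) := by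
          refine Finset.sum_le_sum fun m _ => ?_
          exact le_trans (hψlip _ _) (mul_le_mul_of_nonneg_left (harg m) hB)
      _ = B * (N * Dy + Dx) := by
          rw [← Finset.mul_sum, Finset.sum_add_distrib, Finset.sum_const]
          simp [Dx, mul_comm]
  have claim1 : |S - S'| ≤ (M * B) * (N * Dy + Dx) + ((α + A) * L) * Dx := by
    have : S - S' = ∑ m : Fin N,
        ((ψ (y - x m i) - ψ (ybar - xbar m i)) * h (x m)
          + (α + ψ (ybar - xbar m i)) * (h (x m) - h (xbar m))) := by
      rw [← Finset.sum_sub_distrib]; exact Finset.sum_congr rfl fun m _ => by ring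
    rw [this]
    calc |∑ m : Fin N, ((ψ (y - x m i) - ψ (ybar - xbar m i)) * h (x m)
            + (α + ψ (ybar - xbar m i)) * (h (x m) - h (xbar m)))|
        ≤ ∑ m : Fin N, |(ψ (y - x m i) - ψ (ybar - xbar m i)) * h (x m)
            + (α + ψ (ybar - xbar m i)) * (h (x m) - h (xbar m))| :=
          Finset.abs_sum_le_sum_abs _ _
      _ ≤ ∑ m : Fin N, ((M * B) * (Dy + ‖x m - xbar m‖) + ((α + A) * L) * ‖x m - xbar m‖) := by
          refine Finset.sum_le_sum fun m _ => ?_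
          have e1 : |(ψ (y - x m i) - ψ (ybar - xbar m i)) * h (x m)|
              ≤ (M * B) * (Dy + ‖x m - xbar m‖) := by
            rw [abs_mul]
            calc |ψ (y - x m i) - ψ (ybar - xbar m i)| * |h (x m)|
                ≤ (B * (Dy + ‖x m - xbar m‖)) * M := by
                  apply mul_le_mul _ (hhM _) (abs_nonneg _) (by positivity)
                  exact le_trans (hψlip _ _) (mul_le_mul_of_nonneg_left (harg m) hB)
              _ = (M * B) * (Dy + ‖x m - xbar m‖) := by ring
          have e2 : |(α + ψ (ybar - xbar m i)) * (h (x m) - h (xbar m))|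
              ≤ ((α + A) * L) * ‖x m - xbar m‖ := by
            rw [abs_mul, abs_of_nonneg (by linarith [hψ0 (ybar - xbar m i)])]
            have hφA : α + ψ (ybar - xbar m i) ≤ α + A := by
              have := hψA (ybar - xbar m i)
              have := le_of_abs_le this
              linarith
            calc (α + ψ (ybar - xbar m i)) * |h (x m) - h (xbar m)|
                ≤ (α + A) * (L * ‖x m - xbar m‖) := by
                  apply mul_le_mul hφA (hhlip _ _) (abs_nonneg _) (by linarith)
              _ = ((α + A) * L) * ‖x m - xbar m‖ := by ring
          exact le_trans (abs_add_le _ _) (add_le_add e1 e2)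
      _ = (M * B) * (N * Dy + Dx) + ((α + A) * L) * Dx := by
          rw [Finset.sum_add_distrib, ← Finset.mul_sum, ← Finset.mul_sum,
            Finset.sum_add_distrib, Finset.sum_const]
          simp [Dx, mul_comm]
  have main := frac_lip S S' T T' M ((N:ℝ) * α) hc hT hT' hM hS'
  have hnum : |S - S'| + M * |T - T'| ≤ C * (N * Dy + Dx) := by
    have h2 : M * |T - T'| ≤ M * (B * (N * Dy + Dx)) :=
      mul_le_mul_of_nonneg_left claim2 hM
    have hD : Dx ≤ (N:ℝ) * Dy + Dx := by nlinarith
    have h3 : (α + A) * L * Dx ≤ (α + A) * L * ((N:ℝ) * Dy + Dx) :=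
      mul_le_mul_of_nonneg_left hD (by positivity)
    rw [hC]; nlinarith
  have step : |S / T - S' / T'| ≤ C * (N * Dy + Dx) / (N * α) := by
    refine le_trans main ?_
    gcongr
  have eq1 : C * (N * Dy + Dx) / (N * α) = (C / α) * (Dy + (1 / N) * Dx) := by
    field_simp
  rw [eq1] at step
  refine le_trans step ?_
  apply mul_le_mul_of_nonneg_right (by linarith) (by positivity)
end
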